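/- arXiv:2012.07572 — 10 statements merged into one kernel-verified Lean document; each statement's English description precedes it below -/
import Mathlib

section
/- Let X^(1),…,X^(M) ∈ ℝ^d with M ≥ 2 and let g : ℝ^d → ℝ^p be Lipschitz continuous with Lipschitz constant L. Let E ∈ ℝ^{d×M} be the matrix with columns X^(i) − x̄ and 𝒢 ∈ ℝ^{p×M} the matrix with columns g(X^(i)) − ḡ. Then the spectral norm of E𝒢ᵀ satisfies ‖E𝒢ᵀ‖ ≤ L · Σ_{i=1}^M ‖X^(i) − x̄‖², i.e. ‖E𝒢ᵀ‖ ≤ (M−1) L tr(P) where tr(P) := (1/(M−1)) Σ_{i=1}^M ‖X^(i) − x̄‖². -/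
open Matrix MeasureTheory
open scoped Matrix.Norms.L2Operator NNReal RealInnerProductSpace

/-- The ensemble mean `x̄ = (1/M) ∑ᵢ X⁽ⁱ⁾`. -/
noncomputable def ensMean {d M : ℕ} (X : Fin M → EuclideanSpace ℝ (Fin d)) :
    EuclideanSpace ℝ (Fin d) :=
  (M : ℝ)⁻¹ • ∑ i, X i

/-- The matrix of ensemble deviations, with columns `X⁽ⁱ⁾ − x̄`. -/
noncomputable def devMat {d M : ℕ} (X : Fin M → EuclideanSpace ℝ (Fin d)) :
    Matrix (Fin d) (Fin M) ℝ :=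
  Matrix.of fun j i => (X i - ensMean X) j

/-- The trace of the empirical covariance matrix,
`tr(P) = (1/(M−1)) ∑ᵢ ‖X⁽ⁱ⁾ − x̄‖²`. -/
noncomputable def trP {d M : ℕ} (X : Fin M → EuclideanSpace ℝ (Fin d)) : ℝ :=
  ((M : ℝ) - 1)⁻¹ * ∑ i, ‖X i - ensMean X‖ ^ 2

/-- l2 operator norm is bounded by the Frobenius norm. -/
lemma l2opNorm_le_sqrt_sum_sq {m n : Type*} [Fintype m] [Fintype n] [DecidableEq n]
    (A : Matrix m n ℝ) : ‖A‖ ≤ Real.sqrt (∑ j, ∑ i, (A j i) ^ 2) := by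
  rw [Matrix.l2_opNorm_def]
  refine ContinuousLinearMap.opNorm_le_bound _ (Real.sqrt_nonneg _) fun x => ?_
  have hx2 : ‖x‖ ^ 2 = ∑ i, (x i) ^ 2 := by
    rw [EuclideanSpace.norm_eq, Real.sq_sqrt (by positivity)]
    simp [sq_abs]
  have key : ‖(Matrix.toEuclideanLin A) x‖ ^ 2 ≤ (∑ j, ∑ i, (A j i) ^ 2) * ‖x‖ ^ 2 := by
    have hnorm : ‖(Matrix.toEuclideanLin A) x‖ ^ 2
        = ∑ j, (A *ᵥ (WithLp.equiv 2 (n → ℝ)) x) j ^ 2 := by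
      rw [Matrix.toEuclideanLin_apply, EuclideanSpace.norm_eq, Real.sq_sqrt (by positivity)]
      simp [sq_abs]
    rw [hnorm, hx2, Finset.sum_mul]
    refine Finset.sum_le_sum fun j _ => ?_
    have := Finset.sum_mul_sq_le_sq_mul_sq Finset.univ (fun i => A j i) (fun i => x i)
    simpa [Matrix.mulVec, dotProduct] using this
  calc ‖(Matrix.toEuclideanLin A) x‖
      = Real.sqrt (‖(Matrix.toEuclideanLin A) x‖ ^ 2) := by
        rw [Real.sqrt_sq (norm_nonneg _)]
    _ ≤ Real.sqrt ((∑ j, ∑ i, (A j i) ^ 2) * ‖x‖ ^ 2) := Real.sqrt_le_sqrt key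
    _ = Real.sqrt (∑ j, ∑ i, (A j i) ^ 2) * ‖x‖ := by
        rw [Real.sqrt_mul (by positivity), Real.sqrt_sq (norm_nonneg _)]

/-- The mean minimizes the sum of squared deviations. -/
lemma sum_sq_dev_mean_le {E : Type*} [NormedAddCommGroup E] [InnerProductSpace ℝ E]
    {M : ℕ} (hM : (M : ℝ) ≠ 0) (y : Fin M → E) (c : E) :
    ∑ i, ‖y i - (M : ℝ)⁻¹ • ∑ j, y j‖ ^ 2 ≤ ∑ i, ‖y i - c‖ ^ 2 := by
  set m : E := (M : ℝ)⁻¹ • ∑ j, y j with hm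
  have hzero : ∑ i, (y i - m) = 0 := by
    rw [Finset.sum_sub_distrib, Finset.sum_const, Finset.card_univ, Fintype.card_fin,
      hm, ← Nat.cast_smul_eq_nsmul ℝ, smul_smul, mul_inv_cancel₀ hM, one_smul, sub_self]
  have expand : ∀ i, ‖y i - c‖ ^ 2
      = ‖y i - m‖ ^ 2 + 2 * ⟪y i - m, m - c⟫ + ‖m - c‖ ^ 2 := by
    intro i
    have : y i - c = (y i - m) + (m - c) := by abel
    rw [this, norm_add_sq_real]
  calc ∑ i, ‖y i - m‖ ^ 2
      ≤ ∑ i, ‖y i - m‖ ^ 2 + ((M : ℝ) * ‖m - c‖ ^ 2) := le_add_of_nonneg_right (by positivity)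
    _ = ∑ i, ‖y i - c‖ ^ 2 := by
        simp_rw [expand, Finset.sum_add_distrib, ← Finset.mul_sum, ← sum_inner, hzero,
          inner_zero_left, mul_zero, Finset.sum_const, Finset.card_univ, Fintype.card_fin,
          nsmul_eq_mul]
        ring

/-- spectral norm bound on the cross-covariance `E𝒢ᵀ`:
`‖E𝒢ᵀ‖ ≤ L · ∑ᵢ ‖X⁽ⁱ⁾ − x̄‖² = (M−1) L tr(P)`. -/
theorem cross_covariance_specNorm_bound {d p M : ℕ} (hM : 2 ≤ M) (L : ℝ≥0)
    (g : EuclideanSpace ℝ (Fin d) → EuclideanSpace ℝ (Fin p)) (hg : LipschitzWith L g)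
    (X : Fin M → EuclideanSpace ℝ (Fin d)) :
    ‖devMat X * (devMat (g ∘ X))ᵀ‖ ≤ (L : ℝ) * ∑ i, ‖X i - ensMean X‖ ^ 2 := by
  have hMne : (M : ℝ) ≠ 0 := by positivity
  set S := ∑ i, ‖X i - ensMean X‖ ^ 2 with hS
  set T := ∑ i, ‖(g ∘ X) i - ensMean (g ∘ X)‖ ^ 2 with hT
  have hS0 : 0 ≤ S := by positivity
  have hnormsq : ∀ {n : ℕ} (v : EuclideanSpace ℝ (Fin n)), ‖v‖ ^ 2 = ∑ j, (v j) ^ 2 := by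
    intro n v
    rw [EuclideanSpace.norm_eq, Real.sq_sqrt (by positivity)]
    simp [sq_abs]
  have hE : ‖devMat X‖ ≤ Real.sqrt S := by
    refine (l2opNorm_le_sqrt_sum_sq _).trans_eq ?_
    congr 1
    rw [Finset.sum_comm]
    exact Finset.sum_congr rfl fun i _ => (hnormsq (X i - ensMean X)).symm
  have hG : ‖(devMat (g ∘ X))ᵀ‖ ≤ Real.sqrt T := by
    refine (l2opNorm_le_sqrt_sum_sq _).trans_eq ?_
    congr 1
    exact Finset.sum_congr rfl fun i _ => (hnormsq ((g ∘ X) i - ensMean (g ∘ X))).symm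
  have hTS : T ≤ (L : ℝ) ^ 2 * S := by
    calc T ≤ ∑ i, ‖(g ∘ X) i - g (ensMean X)‖ ^ 2 := by
            rw [hT, ensMean]
            exact sum_sq_dev_mean_le hMne (g ∘ X) (g (ensMean X))
      _ ≤ ∑ i, ((L : ℝ) * ‖X i - ensMean X‖) ^ 2 := by
            refine Finset.sum_le_sum fun i _ => ?_
            have := hg.dist_le_mul (X i) (ensMean X)
            rw [dist_eq_norm, dist_eq_norm] at this
            exact pow_le_pow_left₀ (norm_nonneg _) this 2
      _ = (L : ℝ) ^ 2 * S := by rw [hS, Finset.mul_sum]; exact Finset.sum_congr rfl fun i _ => by ring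
  calc ‖devMat X * (devMat (g ∘ X))ᵀ‖ ≤ ‖devMat X‖ * ‖(devMat (g ∘ X))ᵀ‖ :=
        Matrix.l2_opNorm_mul _ _
    _ ≤ Real.sqrt S * Real.sqrt T :=
        mul_le_mul hE hG (norm_nonneg _) (Real.sqrt_nonneg _)
    _ ≤ Real.sqrt S * Real.sqrt ((L : ℝ) ^ 2 * S) :=
        mul_le_mul_of_nonneg_left (Real.sqrt_le_sqrt hTS) (Real.sqrt_nonneg _)
    _ = (L : ℝ) * S := by
        rw [Real.sqrt_mul (by positivity), Real.sqrt_sq (by positivity)]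
        rw [← mul_assoc, mul_comm (Real.sqrt S), mul_assoc, Real.mul_self_sqrt hS0]
end

section
/- Let X^(1),…,X^(M) ∈ ℝ^d with M ≥ 2 and let g : ℝ^d → ℝ^p be Lipschitz continuous with Lipschitz constant L. Let 𝒢 ∈ ℝ^{p×M} be the matrix with columns g(X^(i)) − ḡ. Then the spectral norm satisfies ‖𝒢𝒢ᵀ‖ ≤ 2(M−1) L² tr(P), where tr(P) := (1/(M−1)) Σ_{i=1}^M ‖X^(i) − x̄‖². -/
open Matrix MeasureTheory
open scoped Matrix.Norms.L2Operator NNReal RealInnerProductSpace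

/-- The mean minimizes the sum of squared distances. -/
lemma ensMean_min {p M : ℕ} (hM : (M : ℝ) ≠ 0) (Y : Fin M → EuclideanSpace ℝ (Fin p))
    (c : EuclideanSpace ℝ (Fin p)) :
    ∑ i, ‖Y i - ensMean Y‖ ^ 2 ≤ ∑ i, ‖Y i - c‖ ^ 2 := by
  have hsum : ∑ i, (Y i - ensMean Y) = 0 := by
    rw [Finset.sum_sub_distrib, ensMean, Finset.sum_const, sub_eq_zero]
    rw [Finset.card_univ, Fintype.card_fin, ← Nat.cast_smul_eq_nsmul ℝ, smul_smul,
      mul_inv_cancel₀ hM, one_smul]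
  have expand : ∀ i, ‖Y i - c‖ ^ 2
      = ‖Y i - ensMean Y‖ ^ 2 + 2 * ⟪Y i - ensMean Y, ensMean Y - c⟫ + ‖ensMean Y - c‖ ^ 2 := by
    intro i
    rw [show Y i - c = (Y i - ensMean Y) + (ensMean Y - c) by abel, norm_add_sq_real]
  calc ∑ i, ‖Y i - ensMean Y‖ ^ 2
      ≤ ∑ i, ‖Y i - ensMean Y‖ ^ 2
        + (2 * ⟪∑ i, (Y i - ensMean Y), ensMean Y - c⟫ + M * ‖ensMean Y - c‖ ^ 2) := by
        rw [hsum, inner_zero_left]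
        have : (0:ℝ) ≤ M * ‖ensMean Y - c‖ ^ 2 := by positivity
        linarith
    _ = ∑ i, ‖Y i - c‖ ^ 2 := by
        simp only [expand, Finset.sum_add_distrib, sum_inner, Finset.mul_sum, Finset.sum_const,
          Finset.card_univ, Fintype.card_fin, nsmul_eq_mul]
        ring

/-- Operator norm of a matrix of columns is at most the Frobenius norm. -/
lemma opNorm_le_frob {p M : ℕ} (v : Fin M → EuclideanSpace ℝ (Fin p)) :
    ‖(Matrix.of fun j i => v i j : Matrix (Fin p) (Fin M) ℝ)‖
      ≤ Real.sqrt (∑ i, ‖v i‖ ^ 2) := by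
  rw [Matrix.l2_opNorm_def]
  apply ContinuousLinearMap.opNorm_le_bound _ (Real.sqrt_nonneg _)
  intro x
  have hx : (LinearEquiv.trans Matrix.toEuclideanLin LinearMap.toContinuousLinearMap)
      (Matrix.of fun j i => v i j : Matrix (Fin p) (Fin M) ℝ) x = ∑ i, x i • v i := by
    apply (WithLp.equiv 2 (Fin p → ℝ)).injective
    have hsum : WithLp.equiv 2 (Fin p → ℝ) (∑ i, x i • v i)
        = ∑ i, x i • (WithLp.equiv 2 (Fin p → ℝ) (v i)) := by
      rw [show ⇑(WithLp.equiv 2 (Fin p → ℝ)) = ⇑(WithLp.linearEquiv 2 ℝ (Fin p → ℝ)) from rfl]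
      rw [map_sum]
      simp
    rw [hsum]
    ext j
    simp only [LinearEquiv.trans_apply, LinearMap.coe_toContinuousLinearMap',
      WithLp.equiv_apply, Matrix.piLp_ofLp_toEuclideanLin, Matrix.toLin'_apply, Matrix.mulVec, dotProduct,
      Finset.sum_apply, Pi.smul_apply, smul_eq_mul]
    exact Finset.sum_congr rfl fun i _ => by simp [Matrix.of_apply, mul_comm]
  rw [hx]
  calc ‖∑ i, x i • v i‖ ≤ ∑ i, ‖x i • v i‖ := norm_sum_le _ _
    _ = ∑ i, ‖x i‖ * ‖v i‖ := by simp [norm_smul]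
    _ ≤ Real.sqrt (∑ i, ‖x i‖ ^ 2) * Real.sqrt (∑ i, ‖v i‖ ^ 2) :=
        Real.sum_mul_le_sqrt_mul_sqrt _ _ _
    _ = Real.sqrt (∑ i, ‖v i‖ ^ 2) * ‖x‖ := by rw [EuclideanSpace.norm_eq x, mul_comm]

/-- spectral norm bound `‖𝒢𝒢ᵀ‖ ≤ 2(M−1) L² tr(P)`. -/
theorem obs_covariance_specNorm_bound {d p M : ℕ} (hM : 2 ≤ M) (L : ℝ≥0)
    (g : EuclideanSpace ℝ (Fin d) → EuclideanSpace ℝ (Fin p)) (hg : LipschitzWith L g)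
    (X : Fin M → EuclideanSpace ℝ (Fin d)) :
    ‖devMat (g ∘ X) * (devMat (g ∘ X))ᵀ‖ ≤ 2 * ((M : ℝ) - 1) * (L : ℝ) ^ 2 * trP X := by
  set Y : Fin M → EuclideanSpace ℝ (Fin p) := g ∘ X with hY
  set G := devMat Y with hG
  have hMne : (M : ℝ) ≠ 0 := by positivity
  have hM1 : (0:ℝ) < (M:ℝ) - 1 := by
    have : (2:ℝ) ≤ (M:ℝ) := by exact_mod_cast hM
    linarith
  -- step 1: ‖G Gᵀ‖ = ‖G‖²
  have h1 : ‖G * Gᵀ‖ = ‖G‖ * ‖G‖ := by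
    have := Matrix.l2_opNorm_conjTranspose_mul_self Gᵀ
    rw [Matrix.conjTranspose_eq_transpose_of_trivial, Matrix.transpose_transpose,
      Matrix.l2_opNorm_def Gᵀ, ← Matrix.l2_opNorm_def Gᵀ,
      show ‖Gᵀ‖ = ‖G‖ from by
        rw [← Matrix.conjTranspose_eq_transpose_of_trivial, Matrix.l2_opNorm_conjTranspose]]
      at this
    exact this
  -- step 2: ‖G‖ ≤ Frobenius
  have h2 : ‖G‖ ≤ Real.sqrt (∑ i, ‖Y i - ensMean Y‖ ^ 2) :=
    opNorm_le_frob (fun i => Y i - ensMean Y)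
  -- step 3: variance bound via Lipschitz
  have h3 : ∑ i, ‖Y i - ensMean Y‖ ^ 2 ≤ (L : ℝ) ^ 2 * ∑ i, ‖X i - ensMean X‖ ^ 2 := by
    calc ∑ i, ‖Y i - ensMean Y‖ ^ 2 ≤ ∑ i, ‖Y i - g (ensMean X)‖ ^ 2 :=
          ensMean_min hMne Y (g (ensMean X))
      _ ≤ ∑ i, (L : ℝ) ^ 2 * ‖X i - ensMean X‖ ^ 2 := by
          apply Finset.sum_le_sum
          intro i _
          have := hg.dist_le_mul (X i) (ensMean X)
          rw [dist_eq_norm, dist_eq_norm] at this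
          have h0 : ‖Y i - g (ensMean X)‖ ≤ (L:ℝ) * ‖X i - ensMean X‖ := this
          calc ‖Y i - g (ensMean X)‖ ^ 2 ≤ ((L:ℝ) * ‖X i - ensMean X‖) ^ 2 := by
                apply sq_le_sq' _ h0
                have := norm_nonneg (Y i - g (ensMean X))
                nlinarith [mul_nonneg (L.coe_nonneg) (norm_nonneg (X i - ensMean X))]
            _ = (L:ℝ) ^ 2 * ‖X i - ensMean X‖ ^ 2 := by ring
      _ = (L : ℝ) ^ 2 * ∑ i, ‖X i - ensMean X‖ ^ 2 := by rw [Finset.mul_sum]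
  have hS : (0:ℝ) ≤ ∑ i, ‖Y i - ensMean Y‖ ^ 2 := by positivity
  have hSX : (0:ℝ) ≤ ∑ i, ‖X i - ensMean X‖ ^ 2 := by positivity
  calc ‖G * Gᵀ‖ = ‖G‖ * ‖G‖ := h1
    _ ≤ Real.sqrt (∑ i, ‖Y i - ensMean Y‖ ^ 2) * Real.sqrt (∑ i, ‖Y i - ensMean Y‖ ^ 2) :=
        mul_le_mul h2 h2 (norm_nonneg _) (Real.sqrt_nonneg _)
    _ = ∑ i, ‖Y i - ensMean Y‖ ^ 2 := Real.mul_self_sqrt hS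
    _ ≤ (L : ℝ) ^ 2 * ∑ i, ‖X i - ensMean X‖ ^ 2 := h3
    _ ≤ 2 * ((L : ℝ) ^ 2 * ∑ i, ‖X i - ensMean X‖ ^ 2) := by
        have : (0:ℝ) ≤ (L:ℝ) ^ 2 * ∑ i, ‖X i - ensMean X‖ ^ 2 := by positivity
        linarith
    _ = 2 * ((M : ℝ) - 1) * (L : ℝ) ^ 2 * trP X := by
        rw [trP]
        field_simp
end

section
/- (Discrete Kalman gain bound.) Let X^(1),…,X^(M) ∈ ℝ^d with M ≥ 2, let g : ℝ^d → ℝ^p be Lipschitz with constant L, let C ∈ ℝ^{p×p} be symmetric positive definite and h ≥ 0. With E := [X^(i) − x̄]_{i=1}^M, 𝒢 := [g(X^(i)) − ḡ]_{i=1}^M, the EnKF Kalman gain K := (1/(M−1)) E 𝒢ᵀ (C + (h/(M−1)) 𝒢𝒢ᵀ)⁻¹ satisfies ‖K‖ ≤ L ‖C⁻¹‖ tr(P), where tr(P) := (1/(M−1)) Σ_{i=1}^M ‖X^(i) − x̄‖². -/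
open Matrix MeasureTheory
open scoped Matrix.Norms.L2Operator NNReal RealInnerProductSpace

namespace EnKFAux

/-- Euclidean norm of a plain vector. -/
noncomputable def enorm {n : ℕ} (v : Fin n → ℝ) : ℝ :=
  ‖(EuclideanSpace.equiv (Fin n) ℝ).symm v‖

lemma enorm_nonneg {n : ℕ} (v : Fin n → ℝ) : 0 ≤ enorm v := norm_nonneg _

lemma enorm_sq {n : ℕ} (v : Fin n → ℝ) : v ⬝ᵥ v = enorm v ^ 2 := by
  rw [enorm, EuclideanSpace.norm_eq, Real.sq_sqrt (by positivity)]
  simp [dotProduct, sq]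

lemma abs_dot_le {n : ℕ} (u v : Fin n → ℝ) : |u ⬝ᵥ v| ≤ enorm u * enorm v := by
  have h := abs_real_inner_le_norm ((EuclideanSpace.equiv (Fin n) ℝ).symm u)
    ((EuclideanSpace.equiv (Fin n) ℝ).symm v)
  have h2 : (inner ℝ ((EuclideanSpace.equiv (Fin n) ℝ).symm u)
      ((EuclideanSpace.equiv (Fin n) ℝ).symm v) : ℝ) = u ⬝ᵥ v := by
    simp [PiLp.inner_apply, dotProduct, RCLike.inner_apply, mul_comm]
  rwa [h2] at h

lemma dot_le {n : ℕ} (u v : Fin n → ℝ) : u ⬝ᵥ v ≤ enorm u * enorm v :=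
  (le_abs_self _).trans (abs_dot_le u v)

lemma enorm_mulVec_le {m n : ℕ} (A : Matrix (Fin m) (Fin n) ℝ) (y : Fin n → ℝ) :
    enorm (A *ᵥ y) ≤ ‖A‖ * enorm y :=
  A.l2_opNorm_mulVec ((EuclideanSpace.equiv (Fin n) ℝ).symm y)

lemma opNorm_le' {m n : ℕ} (A : Matrix (Fin m) (Fin n) ℝ) {K : ℝ} (hK : 0 ≤ K)
    (hb : ∀ y : Fin n → ℝ, enorm (A *ᵥ y) ≤ K * enorm y) : ‖A‖ ≤ K := by
  rw [Matrix.l2_opNorm_def]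
  exact ContinuousLinearMap.opNorm_le_bound _ hK fun x => hb x

lemma symm_dot {n : ℕ} {A : Matrix (Fin n) (Fin n) ℝ} (hA : A.IsHermitian)
    (u v : Fin n → ℝ) : u ⬝ᵥ (A *ᵥ v) = v ⬝ᵥ (A *ᵥ u) := by
  have hAt : Aᵀ = A := by
    rw [← Matrix.conjTranspose_eq_transpose_of_trivial, hA.eq]
  rw [Matrix.dotProduct_mulVec, ← Matrix.mulVec_transpose, hAt, dotProduct_comm]

lemma psd_nonneg {n : ℕ} {A : Matrix (Fin n) (Fin n) ℝ} (hA : A.PosSemidef)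
    (y : Fin n → ℝ) : 0 ≤ y ⬝ᵥ (A *ᵥ y) := by simpa using hA.dotProduct_mulVec_nonneg y

lemma psd_cs {n : ℕ} {A : Matrix (Fin n) (Fin n) ℝ} (hA : A.PosSemidef) (u v : Fin n → ℝ) :
    (u ⬝ᵥ (A *ᵥ v)) ^ 2 ≤ (u ⬝ᵥ (A *ᵥ u)) * (v ⬝ᵥ (A *ᵥ v)) := by
  have key : ∀ s : ℝ, 0 ≤ (v ⬝ᵥ (A *ᵥ v)) * (s * s) + (2 * (u ⬝ᵥ (A *ᵥ v))) * s
      + (u ⬝ᵥ (A *ᵥ u)) := by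
    intro s
    have h0 : 0 ≤ (u + s • v) ⬝ᵥ (A *ᵥ (u + s • v)) := psd_nonneg hA _
    have hvu : v ⬝ᵥ (A *ᵥ u) = u ⬝ᵥ (A *ᵥ v) := symm_dot hA.isHermitian v u
    have hexp : (u + s • v) ⬝ᵥ (A *ᵥ (u + s • v)) =
        (v ⬝ᵥ (A *ᵥ v)) * (s * s) + (2 * (u ⬝ᵥ (A *ᵥ v))) * s + (u ⬝ᵥ (A *ᵥ u)) := by
      simp only [Matrix.mulVec_add, Matrix.mulVec_smul, dotProduct_add, add_dotProduct,
        dotProduct_smul, smul_dotProduct, smul_eq_mul, hvu]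
      ring
    linarith [hexp ▸ h0]
  have hd := discrim_le_zero key
  rw [discrim] at hd
  nlinarith [hd]

lemma inv_norm_le {n : ℕ} {Cm Bm : Matrix (Fin n) (Fin n) ℝ} (hC : Cm.PosDef) (hB : Bm.PosDef)
    (hle : ∀ y, y ⬝ᵥ (Cm *ᵥ y) ≤ y ⬝ᵥ (Bm *ᵥ y)) : ‖Bm⁻¹‖ ≤ ‖Cm⁻¹‖ := by
  have hCd : IsUnit Cm.det := (Matrix.isUnit_iff_isUnit_det _).mp hC.isUnit
  have hBd : IsUnit Bm.det := (Matrix.isUnit_iff_isUnit_det _).mp hB.isUnit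
  have key : ∀ y : Fin n → ℝ, enorm y ≤ ‖Cm⁻¹‖ * enorm (Bm *ᵥ y) := by
    intro y
    rcases eq_or_ne (enorm y) 0 with h0 | h0
    · rw [h0]; exact mul_nonneg (norm_nonneg _) (enorm_nonneg _)
    have ha : 0 < enorm y := lt_of_le_of_ne (enorm_nonneg _) (Ne.symm h0)
    set a := enorm y with ha_def
    set c := ‖Cm⁻¹‖ with hc_def
    set nb := enorm (Bm *ᵥ y) with hnb_def
    have hCC : Cm⁻¹ *ᵥ (Cm *ᵥ y) = y := by
      rw [Matrix.mulVec_mulVec, Matrix.nonsing_inv_mul _ hCd, Matrix.one_mulVec]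
    have hX : (Cm *ᵥ y) ⬝ᵥ (Cm⁻¹ *ᵥ y) = y ⬝ᵥ y := by
      rw [symm_dot hC.inv.isHermitian, hCC]
    have hcs := psd_cs hC.inv.posSemidef (Cm *ᵥ y) y
    rw [hX] at hcs
    have hf1 : (Cm *ᵥ y) ⬝ᵥ (Cm⁻¹ *ᵥ (Cm *ᵥ y)) = y ⬝ᵥ (Cm *ᵥ y) := by
      rw [hCC, dotProduct_comm]
    rw [hf1] at hcs
    have hyy : y ⬝ᵥ y = a ^ 2 := enorm_sq y
    have h1 : y ⬝ᵥ (Cm *ᵥ y) ≤ a * nb := (hle y).trans (dot_le _ _)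
    have h2 : y ⬝ᵥ (Cm⁻¹ *ᵥ y) ≤ a * (c * a) :=
      (dot_le _ _).trans (mul_le_mul_of_nonneg_left (enorm_mulVec_le _ _) (enorm_nonneg _))
    have h1n : 0 ≤ y ⬝ᵥ (Cm *ᵥ y) := psd_nonneg hC.posSemidef y
    have h2n : 0 ≤ y ⬝ᵥ (Cm⁻¹ *ᵥ y) := psd_nonneg hC.inv.posSemidef y
    have hnbn : 0 ≤ nb := enorm_nonneg _
    have hcn : 0 ≤ c := norm_nonneg _
    have hbig : (a ^ 2) ^ 2 ≤ (a * nb) * (a * (c * a)) := by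
      calc (a ^ 2) ^ 2 = (y ⬝ᵥ y) ^ 2 := by rw [hyy]
        _ ≤ (y ⬝ᵥ (Cm *ᵥ y)) * (y ⬝ᵥ (Cm⁻¹ *ᵥ y)) := hcs
        _ ≤ (a * nb) * (a * (c * a)) := by
            apply mul_le_mul h1 h2 h2n (by positivity)
    have hfin : a ^ 3 * a ≤ a ^ 3 * (c * nb) := by nlinarith
    exact le_of_mul_le_mul_left hfin (by positivity)
  apply opNorm_le' _ (norm_nonneg _)
  intro x
  have h := key (Bm⁻¹ *ᵥ x)
  rwa [Matrix.mulVec_mulVec, Matrix.mul_nonsing_inv _ hBd, Matrix.one_mulVec] at h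

lemma mulVecEuclid {d M : ℕ} (v : Fin M → EuclideanSpace ℝ (Fin d)) (u : Fin M → ℝ) :
    (EuclideanSpace.equiv (Fin d) ℝ).symm ((Matrix.of fun j i => v i j) *ᵥ u) = ∑ i, u i • v i := by
  ext j
  show ∑ x, v x j * u x = _
  rw [show ((∑ x, u x • v x) : EuclideanSpace ℝ (Fin d)) j = ∑ x, u x * v x j by
    simp]
  exact Finset.sum_congr rfl fun x _ => mul_comm _ _

lemma sum_sq_sub_mean_le {E : Type*} [NormedAddCommGroup E] [InnerProductSpace ℝ E] {M : ℕ}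
    (hM : (M : ℝ) ≠ 0) (a : Fin M → E) (c : E) :
    ∑ i, ‖a i - (M : ℝ)⁻¹ • ∑ j, a j‖ ^ 2 ≤ ∑ i, ‖a i - c‖ ^ 2 := by
  set m : E := (M : ℝ)⁻¹ • ∑ j, a j with hm
  have hsum : ∑ i, (a i - m) = 0 := by
    rw [Finset.sum_sub_distrib, Finset.sum_const, Finset.card_univ, Fintype.card_fin,
      ← Nat.cast_smul_eq_nsmul ℝ, hm, smul_smul, mul_inv_cancel₀ hM, one_smul, sub_self]
  have key : ∀ i : Fin M, ‖a i - c‖ ^ 2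
      = ‖a i - m‖ ^ 2 + 2 * (inner ℝ (a i - m) (m - c) : ℝ) + ‖m - c‖ ^ 2 := by
    intro i
    rw [← norm_add_sq_real]
    congr 1
    abel
  have hexpand : ∑ i, ‖a i - c‖ ^ 2
      = ∑ i, ‖a i - m‖ ^ 2 + (2 * (inner ℝ (∑ i, (a i - m)) (m - c) : ℝ) + (M : ℝ) * ‖m - c‖ ^ 2) := by
    rw [Finset.sum_congr rfl fun i _ => key i, Finset.sum_add_distrib, Finset.sum_add_distrib,
      ← Finset.mul_sum, ← sum_inner, Finset.sum_const, Finset.card_univ, Fintype.card_fin,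
      ← Nat.cast_smul_eq_nsmul ℝ, smul_eq_mul]
    ring
  rw [hexpand, hsum, inner_zero_left]
  have : 0 ≤ (M : ℝ) * ‖m - c‖ ^ 2 := by positivity
  linarith

end EnKFAux

open EnKFAux in
/-- the EnKF Kalman gain
`K = (1/(M−1)) E 𝒢ᵀ (C + (h/(M−1)) 𝒢𝒢ᵀ)⁻¹` satisfies `‖K‖ ≤ L ‖C⁻¹‖ tr(P)`. -/
theorem discrete_kalman_gain_bound {d p M : ℕ} (hM : 2 ≤ M) (L : ℝ≥0)
    (g : EuclideanSpace ℝ (Fin d) → EuclideanSpace ℝ (Fin p)) (hg : LipschitzWith L g)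
    (C : Matrix (Fin p) (Fin p) ℝ) (hC : C.PosDef) (h : ℝ) (hh : 0 ≤ h)
    (X : Fin M → EuclideanSpace ℝ (Fin d)) :
    ‖(((M : ℝ) - 1)⁻¹ • (devMat X * (devMat (g ∘ X))ᵀ)) *
        (C + (h / ((M : ℝ) - 1)) • (devMat (g ∘ X) * (devMat (g ∘ X))ᵀ))⁻¹‖ ≤
      (L : ℝ) * ‖C⁻¹‖ * trP X := by
  classical
  have hM1 : (0 : ℝ) < (M : ℝ) - 1 := by
    have : (2 : ℝ) ≤ (M : ℝ) := by exact_mod_cast hM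
    linarith
  set s : ℝ := h / ((M : ℝ) - 1) with hs_def
  have hs : 0 ≤ s := div_nonneg hh hM1.le
  set G := devMat (g ∘ X) with hG_def
  set E := devMat X with hE_def
  -- positivity of the regularized covariance
  have hGG : (G * Gᵀ).PosSemidef := by
    have h1 := Matrix.posSemidef_self_mul_conjTranspose G
    rwa [Matrix.conjTranspose_eq_transpose_of_trivial] at h1
  have hsGG : (s • (G * Gᵀ)).PosSemidef := by
    refine .of_dotProduct_mulVec_nonneg ?_ fun x => ?_
    · rw [Matrix.IsHermitian, Matrix.conjTranspose_smul, hGG.isHermitian.eq, star_trivial]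
    · rw [Matrix.smul_mulVec, dotProduct_smul, smul_eq_mul]
      exact mul_nonneg hs (hGG.dotProduct_mulVec_nonneg x)
  have hB : (C + s • (G * Gᵀ)).PosDef := hC.add_posSemidef hsGG
  have hBinv : ‖(C + s • (G * Gᵀ))⁻¹‖ ≤ ‖C⁻¹‖ := by
    refine inv_norm_le hC hB fun y => ?_
    have h0 : 0 ≤ y ⬝ᵥ ((s • (G * Gᵀ)) *ᵥ y) := psd_nonneg hsGG y
    rw [Matrix.add_mulVec, dotProduct_add]
    linarith
  -- column vectors
  set v : Fin M → EuclideanSpace ℝ (Fin d) := fun i => X i - ensMean X with hv_def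
  set w : Fin M → EuclideanSpace ℝ (Fin p) := fun i => g (X i) - ensMean (g ∘ X) with hw_def
  have hEv : E = Matrix.of fun j i => v i j := rfl
  have hGw : G = Matrix.of fun j i => w i j := rfl
  -- ‖E * Gᵀ‖ ≤ ∑ ‖v i‖ * ‖w i‖
  have hEG : ‖E * Gᵀ‖ ≤ ∑ i, ‖v i‖ * ‖w i‖ := by
    apply opNorm_le' _ (Finset.sum_nonneg fun i _ => mul_nonneg (norm_nonneg _) (norm_nonneg _))
    intro y
    rw [← Matrix.mulVec_mulVec]
    set u : Fin M → ℝ := Gᵀ *ᵥ y with hu_def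
    have hu : ∀ i, |u i| ≤ ‖w i‖ * EnKFAux.enorm y := by
      intro i
      have h1 : u i = (fun j => w i j) ⬝ᵥ y := by
        simp [hu_def, hGw, Matrix.mulVec, dotProduct]
      rw [h1]
      exact abs_dot_le _ _
    have h2 : EnKFAux.enorm (E *ᵥ u) = ‖∑ i, u i • v i‖ := by
      rw [EnKFAux.enorm, hEv, mulVecEuclid]
    rw [h2]
    calc ‖∑ i, u i • v i‖ ≤ ∑ i, ‖u i • v i‖ := norm_sum_le _ _
      _ = ∑ i, |u i| * ‖v i‖ := by
          simp [norm_smul, Real.norm_eq_abs]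
      _ ≤ ∑ i, (‖w i‖ * EnKFAux.enorm y) * ‖v i‖ := by
          refine Finset.sum_le_sum fun i _ => ?_
          exact mul_le_mul_of_nonneg_right (hu i) (norm_nonneg _)
      _ = (∑ i, ‖v i‖ * ‖w i‖) * EnKFAux.enorm y := by
          rw [Finset.sum_mul]
          exact Finset.sum_congr rfl fun i _ => by ring
  -- Lipschitz bound on the ∑ ‖w i‖²
  have hw2 : ∑ i, ‖w i‖ ^ 2 ≤ (L : ℝ) ^ 2 * ∑ i, ‖v i‖ ^ 2 := by
    have hmean : ∑ i, ‖w i‖ ^ 2 ≤ ∑ i, ‖g (X i) - g (ensMean X)‖ ^ 2 := by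
      have hMne : ((M : ℕ) : ℝ) ≠ 0 := by positivity
      have := sum_sq_sub_mean_le hMne (fun i => g (X i)) (g (ensMean X))
      simpa [hw_def, ensMean, Function.comp] using this
    refine hmean.trans ?_
    rw [Finset.mul_sum]
    refine Finset.sum_le_sum fun i _ => ?_
    have hlip : ‖g (X i) - g (ensMean X)‖ ≤ (L : ℝ) * ‖X i - ensMean X‖ := by
      have := hg.dist_le_mul (X i) (ensMean X)
      rwa [dist_eq_norm, dist_eq_norm] at this
    calc ‖g (X i) - g (ensMean X)‖ ^ 2 ≤ ((L : ℝ) * ‖X i - ensMean X‖) ^ 2 := by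
          exact pow_le_pow_left₀ (norm_nonneg _) hlip 2
      _ = (L : ℝ) ^ 2 * ‖v i‖ ^ 2 := by rw [mul_pow]
  -- Cauchy–Schwarz
  have hvw : ∑ i, ‖v i‖ * ‖w i‖ ≤ (L : ℝ) * ∑ i, ‖v i‖ ^ 2 := by
    have hcs := Finset.sum_mul_sq_le_sq_mul_sq Finset.univ (fun i => ‖v i‖) (fun i => ‖w i‖)
    have hS : 0 ≤ ∑ i, ‖v i‖ * ‖w i‖ :=
      Finset.sum_nonneg fun i _ => mul_nonneg (norm_nonneg _) (norm_nonneg _)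
    have hT : 0 ≤ ∑ i, ‖v i‖ ^ 2 := Finset.sum_nonneg fun i _ => sq_nonneg _
    have hL : (0 : ℝ) ≤ (L : ℝ) := L.coe_nonneg
    have hsq : (∑ i, ‖v i‖ * ‖w i‖) ^ 2 ≤ ((L : ℝ) * ∑ i, ‖v i‖ ^ 2) ^ 2 := by
      calc (∑ i, ‖v i‖ * ‖w i‖) ^ 2 ≤ (∑ i, ‖v i‖ ^ 2) * ∑ i, ‖w i‖ ^ 2 := hcs
        _ ≤ (∑ i, ‖v i‖ ^ 2) * ((L : ℝ) ^ 2 * ∑ i, ‖v i‖ ^ 2) :=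
            mul_le_mul_of_nonneg_left hw2 hT
        _ = ((L : ℝ) * ∑ i, ‖v i‖ ^ 2) ^ 2 := by ring
    exact (pow_le_pow_iff_left₀ hS (by positivity) two_ne_zero).mp hsq
  have hEG2 : ‖E * Gᵀ‖ ≤ (L : ℝ) * ∑ i, ‖v i‖ ^ 2 := hEG.trans hvw
  -- assemble
  have hEGn : 0 ≤ ‖E * Gᵀ‖ := norm_nonneg _
  calc ‖(((M : ℝ) - 1)⁻¹ • (E * Gᵀ)) * (C + s • (G * Gᵀ))⁻¹‖
      ≤ ‖((M : ℝ) - 1)⁻¹ • (E * Gᵀ)‖ * ‖(C + s • (G * Gᵀ))⁻¹‖ := Matrix.l2_opNorm_mul _ _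
    _ = ((M : ℝ) - 1)⁻¹ * ‖E * Gᵀ‖ * ‖(C + s • (G * Gᵀ))⁻¹‖ := by
        rw [norm_smul, Real.norm_eq_abs, abs_of_nonneg (by positivity)]
    _ ≤ ((M : ℝ) - 1)⁻¹ * ((L : ℝ) * ∑ i, ‖v i‖ ^ 2) * ‖C⁻¹‖ := by
        apply mul_le_mul
        · exact mul_le_mul_of_nonneg_left hEG2 (by positivity)
        · exact hBinv
        · exact norm_nonneg _
        · positivity
    _ = (L : ℝ) * ‖C⁻¹‖ * trP X := by
        rw [trP]
        ring
end

section
/- (Unperturbed-filter gain bound.) Let X^(1),…,X^(M) ∈ ℝ^d with M ≥ 2, let g : ℝ^d → ℝ^p be Lipschitz with constant L, let C ∈ ℝ^{p×p} be symmetric positive definite and h ≥ 0. Set S := C + (h/(M−1)) 𝒢𝒢ᵀ (symmetric positive definite) and define K̃ := (1/(M−1)) E 𝒢ᵀ S^{−1/2} (C^{1/2} + S^{1/2})⁻¹, where C^{1/2}, S^{1/2} are the positive semidefinite square roots and S^{−1/2} := (S^{1/2})⁻¹. Then ‖K̃‖ ≤ (1/2) L ‖C⁻¹‖ tr(P), where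 tr(P) := (1/(M−1)) Σ_{i=1}^M ‖X^(i) − x̄‖². -/
open Matrix MeasureTheory
open scoped Matrix.Norms.L2Operator NNReal RealInnerProductSpace

/-- The positive semidefinite square root (the definition Mathlib had, since removed). -/
noncomputable def Matrix.PosSemidef.sqrt {n 𝕜 : Type*} [Fintype n] [RCLike 𝕜] [PartialOrder 𝕜]
    [StarOrderedRing 𝕜] [DecidableEq n]
    {A : Matrix n n 𝕜} (hA : A.PosSemidef) : Matrix n n 𝕜 :=
  hA.1.eigenvectorUnitary.1 * diagonal ((↑) ∘ (√·) ∘ hA.1.eigenvalues) *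
  (star hA.1.eigenvectorUnitary : Matrix n n 𝕜)

section Aux

set_option linter.unusedSectionVars false

variable {n m : Type*} [Fintype n] [Fintype m] [DecidableEq n] [DecidableEq m]

lemma Matrix.PosSemidef.sqrt_mul_self {A : Matrix n n ℝ} (hA : A.PosSemidef) :
    hA.sqrt * hA.sqrt = A := by
  have hU : (star hA.1.eigenvectorUnitary : Matrix n n ℝ) * hA.1.eigenvectorUnitary.1 = 1 :=
    Unitary.coe_star_mul_self _
  have hA' : A = hA.1.eigenvectorUnitary.1 * diagonal (RCLike.ofReal ∘ hA.1.eigenvalues) *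
      (star hA.1.eigenvectorUnitary : Matrix n n ℝ) := by
    conv_lhs => rw [hA.1.spectral_theorem]
    rfl
  conv_rhs => rw [hA']
  simp only [Matrix.PosSemidef.sqrt]
  rw [show ∀ a b c d e f : Matrix n n ℝ, a * b * c * (d * e * f) = a * (b * (c * d) * e) * f by
    intro a b c d e f; simp only [Matrix.mul_assoc], hU, Matrix.mul_one, diagonal_mul_diagonal]
  congr 2
  congr 1
  funext i
  simp [Real.mul_self_sqrt (hA.eigenvalues_nonneg i)]

lemma Matrix.PosSemidef.posSemidef_sqrt {A : Matrix n n ℝ} (hA : A.PosSemidef) :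
    hA.sqrt.PosSemidef := by
  have := (Matrix.PosSemidef.diagonal (d := fun i => Real.sqrt (hA.1.eigenvalues i))
    fun i => Real.sqrt_nonneg _).mul_mul_conjTranspose_same hA.1.eigenvectorUnitary.1
  exact this

lemma aux_transpose_eq_conjT (A : Matrix m n ℝ) : Aᵀ = Aᴴ := by
  ext i j; simp [Matrix.conjTranspose_apply]

lemma aux_opNorm_le (A : Matrix m n ℝ) {c : ℝ} (hc : 0 ≤ c)
    (H : ∀ v : n → ℝ, ‖(WithLp.equiv 2 (m → ℝ)).symm (A *ᵥ v)‖ ≤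
      c * ‖(WithLp.equiv 2 (n → ℝ)).symm v‖) : ‖A‖ ≤ c := by
  rw [Matrix.l2_opNorm_def]
  refine ContinuousLinearMap.opNorm_le_bound _ hc fun x => ?_
  simpa [Matrix.toEuclideanLin_apply] using H ((WithLp.equiv 2 (n → ℝ)) x)

lemma aux_dot_eq_inner (v w : n → ℝ) :
    v ⬝ᵥ w = ⟪(WithLp.equiv 2 (n → ℝ)).symm v, (WithLp.equiv 2 (n → ℝ)).symm w⟫ := by
  simp [PiLp.inner_apply, dotProduct, RCLike.inner_apply, mul_comm]

lemma aux_norm_sq (v : n → ℝ) : ‖(WithLp.equiv 2 (n → ℝ)).symm v‖ ^ 2 = v ⬝ᵥ v := by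
  rw [aux_dot_eq_inner, real_inner_self_eq_norm_sq]

lemma aux_dot_le (v w : n → ℝ) :
    v ⬝ᵥ w ≤ ‖(WithLp.equiv 2 (n → ℝ)).symm v‖ * ‖(WithLp.equiv 2 (n → ℝ)).symm w‖ := by
  rw [aux_dot_eq_inner]; exact real_inner_le_norm _ _

lemma aux_norm_mulVec (A : Matrix m n ℝ) (v : n → ℝ) :
    ‖(WithLp.equiv 2 (m → ℝ)).symm (A *ᵥ v)‖ ≤ ‖A‖ * ‖(WithLp.equiv 2 (n → ℝ)).symm v‖ := by
  simpa using A.l2_opNorm_mulVec ((WithLp.equiv 2 (n → ℝ)).symm v)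

lemma aux_dot_nonneg (v : n → ℝ) : 0 ≤ v ⬝ᵥ v := by
  rw [← aux_norm_sq]; positivity

lemma aux_dot_mulVec_symm {R : Matrix n n ℝ} (hR : R.IsHermitian) (v w : n → ℝ) :
    (R *ᵥ v) ⬝ᵥ w = v ⬝ᵥ (R *ᵥ w) := by
  rw [Matrix.dotProduct_mulVec v R w, ← Matrix.mulVec_transpose,
    aux_transpose_eq_conjT, hR.eq, dotProduct_comm]

lemma aux_coercive {A : Matrix n n ℝ} (hA : A.PosSemidef) (hd : IsUnit A.det) (v : n → ℝ) :
    v ⬝ᵥ v ≤ ‖A⁻¹‖ * (v ⬝ᵥ (A *ᵥ v)) := by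
  set R := hA.sqrt with hRdef
  have hRR : R * R = A := hA.sqrt_mul_self
  have hRherm : R.IsHermitian := hA.posSemidef_sqrt.isHermitian
  have hdR : IsUnit R.det := by
    have : R.det * R.det = A.det := by rw [← Matrix.det_mul, hRR]
    exact isUnit_of_mul_isUnit_left (this ▸ hd)
  have hRRinv : R *ᵥ (R⁻¹ *ᵥ v) = v := by
    rw [Matrix.mulVec_mulVec, Matrix.mul_nonsing_inv _ hdR, Matrix.one_mulVec]
  have key : v ⬝ᵥ v = (R *ᵥ v) ⬝ᵥ (R⁻¹ *ᵥ v) := by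
    rw [aux_dot_mulVec_symm hRherm, hRRinv]
  have hRinvherm : (R⁻¹).IsHermitian := by
    have : (R⁻¹)ᴴ = R⁻¹ := by rw [Matrix.conjTranspose_nonsing_inv, hRherm.eq]
    exact this
  have hnormsq : ‖R⁻¹‖ * ‖R⁻¹‖ = ‖A⁻¹‖ := by
    rw [← Matrix.l2_opNorm_conjTranspose_mul_self (R⁻¹), hRinvherm.eq, ← Matrix.mul_inv_rev, hRR]
  have hq : (R *ᵥ v) ⬝ᵥ (R *ᵥ v) = v ⬝ᵥ (A *ᵥ v) := by
    rw [aux_dot_mulVec_symm hRherm, Matrix.mulVec_mulVec, hRR]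
  have h1 : v ⬝ᵥ v ≤ ‖(WithLp.equiv 2 (n → ℝ)).symm (R *ᵥ v)‖ *
      (‖R⁻¹‖ * ‖(WithLp.equiv 2 (n → ℝ)).symm v‖) := by
    rw [key]
    exact le_trans (aux_dot_le _ _)
      (mul_le_mul_of_nonneg_left (aux_norm_mulVec _ _) (norm_nonneg _))
  set x := ‖(WithLp.equiv 2 (n → ℝ)).symm (R *ᵥ v)‖ with hx
  set y := ‖(WithLp.equiv 2 (n → ℝ)).symm v‖ with hy
  have hx2 : x ^ 2 = v ⬝ᵥ (A *ᵥ v) := by rw [hx, aux_norm_sq, hq]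
  have hy2 : y ^ 2 = v ⬝ᵥ v := aux_norm_sq v
  have hxn : 0 ≤ x := norm_nonneg _
  have hyn : 0 ≤ y := norm_nonneg _
  have hRn : 0 ≤ ‖R⁻¹‖ := norm_nonneg _
  rw [← hnormsq, ← hy2, ← hx2]
  rcases eq_or_lt_of_le hyn with h0 | h0
  · rw [← h0]
    have : ((0:ℝ)) ^ 2 = 0 := by norm_num
    rw [this]
    positivity
  · have hyx : y ≤ ‖R⁻¹‖ * x := by
      have := h1
      rw [← hy2] at this
      have h2 : y * y ≤ (‖R⁻¹‖ * x) * y := by nlinarith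
      exact le_of_mul_le_mul_right (by nlinarith) h0
    nlinarith

lemma aux_inv_norm_le {B : Matrix n n ℝ} (hB : B.IsHermitian) {c : ℝ} (hc : 0 < c)
    (H : ∀ v : n → ℝ, c * (v ⬝ᵥ v) ≤ v ⬝ᵥ (B *ᵥ v)) : B.PosDef ∧ ‖B⁻¹‖ ≤ c⁻¹ := by
  have hpd : B.PosDef := by
    refine Matrix.PosDef.of_dotProduct_mulVec_pos hB fun v hv => ?_
    have h1 : 0 < v ⬝ᵥ v := by
      rcases lt_or_eq_of_le (aux_dot_nonneg v) with h | h
      · exact h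
      · exact absurd ((dotProduct_self_eq_zero).mp h.symm) hv
    simpa [star_trivial] using lt_of_lt_of_le (by positivity) (H v)
  have hd : IsUnit B.det := isUnit_iff_ne_zero.mpr hpd.det_pos.ne'
  refine ⟨hpd, aux_opNorm_le _ (by positivity) fun w => ?_⟩
  set u := B⁻¹ *ᵥ w with hu
  have hBu : B *ᵥ u = w := by
    rw [hu, Matrix.mulVec_mulVec, Matrix.mul_nonsing_inv _ hd, Matrix.one_mulVec]
  have h1 : c * (u ⬝ᵥ u) ≤ ‖(WithLp.equiv 2 (n → ℝ)).symm u‖ *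
      ‖(WithLp.equiv 2 (n → ℝ)).symm w‖ := le_trans (H u) (hBu ▸ aux_dot_le u w)
  rw [← aux_norm_sq u] at h1
  set x := ‖(WithLp.equiv 2 (n → ℝ)).symm u‖
  set y := ‖(WithLp.equiv 2 (n → ℝ)).symm w‖
  have hxn : 0 ≤ x := norm_nonneg _
  have hyn : 0 ≤ y := norm_nonneg _
  rcases eq_or_lt_of_le hxn with h0 | h0
  · rw [← h0]; positivity
  · have h2 : c * x ≤ y := by
      have h3 : (c * x) * x ≤ y * x := by nlinarith
      exact le_of_mul_le_mul_right h3 h0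
    rw [inv_mul_eq_div, le_div_iff₀ hc]
    nlinarith

lemma aux_sq_le {x y a : ℝ} (hx : 0 ≤ x) (hy : 0 ≤ y) (ha : 0 ≤ a) (hxy : x ^ 2 ≤ a * y ^ 2) :
    x ≤ Real.sqrt a * y := by
  have h1 : x = Real.sqrt (x ^ 2) := (Real.sqrt_sq hx).symm
  rw [h1]
  calc Real.sqrt (x ^ 2) ≤ Real.sqrt (a * y ^ 2) := Real.sqrt_le_sqrt hxy
    _ = Real.sqrt a * y := by rw [Real.sqrt_mul ha, Real.sqrt_sq hy]

lemma aux_sqrt_det_isUnit {A : Matrix n n ℝ} (hA : A.PosSemidef) (hd : IsUnit A.det) :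
    IsUnit hA.sqrt.det := by
  have : hA.sqrt.det * hA.sqrt.det = A.det := by rw [← Matrix.det_mul, hA.sqrt_mul_self]
  exact isUnit_of_mul_isUnit_left (this ▸ hd)

lemma aux_sqrt_inv_norm {A : Matrix n n ℝ} (hA : A.PosSemidef) (hd : IsUnit A.det) {a : ℝ}
    (ha : 0 ≤ a) (hco : ∀ v : n → ℝ, v ⬝ᵥ v ≤ a * (v ⬝ᵥ (A *ᵥ v))) :
    ‖(hA.sqrt)⁻¹‖ ≤ Real.sqrt a := by
  set R := hA.sqrt with hR
  have hRherm : R.IsHermitian := hA.posSemidef_sqrt.isHermitian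
  have hdR : IsUnit R.det := aux_sqrt_det_isUnit hA hd
  refine aux_opNorm_le _ (Real.sqrt_nonneg _) fun w => ?_
  set v := R⁻¹ *ᵥ w with hv
  have hRv : R *ᵥ v = w := by
    rw [hv, Matrix.mulVec_mulVec, Matrix.mul_nonsing_inv _ hdR, Matrix.one_mulVec]
  have hq : v ⬝ᵥ (A *ᵥ v) = w ⬝ᵥ w := by
    rw [← hA.sqrt_mul_self, ← Matrix.mulVec_mulVec, ← aux_dot_mulVec_symm hRherm, hRv]
  have h1 : ‖(WithLp.equiv 2 (n → ℝ)).symm v‖ ^ 2 ≤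
      a * ‖(WithLp.equiv 2 (n → ℝ)).symm w‖ ^ 2 := by
    rw [aux_norm_sq, aux_norm_sq]
    calc v ⬝ᵥ v ≤ a * (v ⬝ᵥ (A *ᵥ v)) := hco v
      _ = a * (w ⬝ᵥ w) := by rw [hq]
  exact aux_sq_le (norm_nonneg _) (norm_nonneg _) ha h1

end Aux

lemma devMat_mulVec {d M : ℕ} (X : Fin M → EuclideanSpace ℝ (Fin d)) (v : Fin M → ℝ) :
    (WithLp.equiv 2 (Fin d → ℝ)).symm (devMat X *ᵥ v) = ∑ i, v i • (X i - ensMean X) := by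
  ext j
  rw [WithLp.ofLp_sum, Finset.sum_apply]
  simp [devMat, Matrix.mulVec, Matrix.of_apply, dotProduct, PiLp.smul_apply, PiLp.sub_apply,
    mul_comm]

lemma devMat_norm_le {d M : ℕ} (X : Fin M → EuclideanSpace ℝ (Fin d)) :
    ‖devMat X‖ ≤ Real.sqrt (∑ i, ‖X i - ensMean X‖ ^ 2) := by
  refine aux_opNorm_le _ (Real.sqrt_nonneg _) fun v => ?_
  rw [devMat_mulVec]
  have hnormv : ‖(WithLp.equiv 2 (Fin M → ℝ)).symm v‖ = Real.sqrt (∑ i, v i ^ 2) := by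
    rw [EuclideanSpace.norm_eq]
    congr 1
    refine Finset.sum_congr rfl fun i _ => ?_
    simp [Real.norm_eq_abs, sq_abs]
  calc ‖∑ i, v i • (X i - ensMean X)‖ ≤ ∑ i, ‖v i • (X i - ensMean X)‖ := norm_sum_le _ _
    _ = ∑ i, |v i| * ‖X i - ensMean X‖ := by simp [norm_smul]
    _ ≤ Real.sqrt (∑ i, |v i| ^ 2) * Real.sqrt (∑ i, ‖X i - ensMean X‖ ^ 2) :=
        Real.sum_mul_le_sqrt_mul_sqrt _ _ _
    _ = Real.sqrt (∑ i, ‖X i - ensMean X‖ ^ 2) * ‖(WithLp.equiv 2 (Fin M → ℝ)).symm v‖ := by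
        rw [hnormv, mul_comm]
        congr 2
        exact Finset.sum_congr rfl fun i _ => by rw [sq_abs]

lemma variance_min {d M : ℕ} (hM : 1 ≤ M) (Y : Fin M → EuclideanSpace ℝ (Fin d))
    (c : EuclideanSpace ℝ (Fin d)) :
    ∑ i, ‖Y i - ensMean Y‖ ^ 2 ≤ ∑ i, ‖Y i - c‖ ^ 2 := by
  have hMne : (M : ℝ) ≠ 0 := Nat.cast_ne_zero.mpr (by omega)
  have hzero : ∑ i, (Y i - ensMean Y) = 0 := by
    rw [Finset.sum_sub_distrib, Finset.sum_const, Finset.card_univ, Fintype.card_fin,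
      ← Nat.cast_smul_eq_nsmul ℝ, ensMean, smul_smul, mul_inv_cancel₀ hMne, one_smul, sub_self]
  have key : ∀ i, ‖Y i - c‖ ^ 2 = ‖Y i - ensMean Y‖ ^ 2 +
      2 * ⟪Y i - ensMean Y, ensMean Y - c⟫ + ‖ensMean Y - c‖ ^ 2 := fun i => by
    rw [← sub_add_sub_cancel (Y i) (ensMean Y) c]
    exact norm_add_sq_real _ _
  have hsum : ∑ i, ‖Y i - c‖ ^ 2 = (∑ i, ‖Y i - ensMean Y‖ ^ 2) +
      (M : ℝ) * ‖ensMean Y - c‖ ^ 2 := by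
    simp_rw [key]
    rw [Finset.sum_add_distrib, Finset.sum_add_distrib]
    have h0 : ∑ i : Fin M, 2 * ⟪Y i - ensMean Y, ensMean Y - c⟫ = 0 := by
      rw [← Finset.mul_sum, ← sum_inner, hzero, inner_zero_left, mul_zero]
    rw [h0, add_zero, Finset.sum_const, Finset.card_univ, Fintype.card_fin, nsmul_eq_mul]
  have hnn : 0 ≤ (M : ℝ) * ‖ensMean Y - c‖ ^ 2 := by positivity
  rw [hsum]
  linarith

/-- the unperturbed-filter gain
`K̃ = (1/(M−1)) E 𝒢ᵀ S^{−1/2} (C^{1/2} + S^{1/2})⁻¹` with `S = C + (h/(M−1)) 𝒢𝒢ᵀ`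
satisfies `‖K̃‖ ≤ (1/2) L ‖C⁻¹‖ tr(P)`. -/
theorem unperturbed_filter_gain_bound {d p M : ℕ} (hM : 2 ≤ M) (L : ℝ≥0)
    (g : EuclideanSpace ℝ (Fin d) → EuclideanSpace ℝ (Fin p)) (hg : LipschitzWith L g)
    (C : Matrix (Fin p) (Fin p) ℝ) (hC : C.PosDef) (h : ℝ) (hh : 0 ≤ h)
    (X : Fin M → EuclideanSpace ℝ (Fin d))
    (hS : (C + (h / ((M : ℝ) - 1)) • (devMat (g ∘ X) * (devMat (g ∘ X))ᵀ)).PosSemidef) :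
    ‖(((M : ℝ) - 1)⁻¹ • (devMat X * (devMat (g ∘ X))ᵀ)) * (hS.sqrt)⁻¹ *
        (hC.posSemidef.sqrt + hS.sqrt)⁻¹‖ ≤
      (1 / 2) * (L : ℝ) * ‖C⁻¹‖ * trP X := by
  classical
  have hM1 : (1:ℝ) ≤ (M:ℝ) - 1 := by
    have h2 : (2:ℝ) ≤ (M:ℝ) := by exact_mod_cast hM
    linarith
  have hM1pos : (0:ℝ) < (M:ℝ) - 1 := by linarith
  set T := ∑ i, ‖X i - ensMean X‖ ^ 2 with hT
  have hTnn : 0 ≤ T := by positivity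
  have htrP : trP X = ((M:ℝ) - 1)⁻¹ * T := rfl
  have htrPnn : 0 ≤ trP X := by
    rw [htrP]; exact mul_nonneg (inv_nonneg.mpr hM1pos.le) hTnn
  rcases Nat.eq_zero_or_pos p with hp | hp
  · subst hp
    have hzero : (((M : ℝ) - 1)⁻¹ • (devMat X * (devMat (g ∘ X))ᵀ)) * (hS.sqrt)⁻¹ *
        (hC.posSemidef.sqrt + hS.sqrt)⁻¹ = 0 := by
      ext i j
      exact j.elim0
    rw [hzero, norm_zero]
    exact mul_nonneg (mul_nonneg (mul_nonneg (by norm_num) L.coe_nonneg) (norm_nonneg _)) htrPnn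
  haveI : Nonempty (Fin p) := ⟨⟨0, hp⟩⟩
  set E := devMat X with hE
  set G := devMat (g ∘ X) with hG
  set a := ‖C⁻¹‖ with ha
  have hCdet : IsUnit C.det := isUnit_iff_ne_zero.mpr hC.det_pos.ne'
  have hapos : 0 < a := by
    rw [ha]
    refine norm_pos_iff.mpr fun h0 => ?_
    have h1 := Matrix.nonsing_inv_mul C hCdet
    rw [h0, Matrix.zero_mul] at h1
    have h2 := congrFun (congrFun h1 ⟨0, hp⟩) ⟨0, hp⟩
    simp [Matrix.one_apply] at h2
  -- quadratic form facts
  have hCquad : ∀ v : Fin p → ℝ, v ≠ 0 → 0 < v ⬝ᵥ (C *ᵥ v) := fun v hv => by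
    simpa [star_trivial] using hC.dotProduct_mulVec_pos hv
  have hGGquad : ∀ v : Fin p → ℝ,
      0 ≤ v ⬝ᵥ (((h / ((M : ℝ) - 1)) • (G * Gᵀ)) *ᵥ v) := fun v => by
    have h1 : v ⬝ᵥ (((h / ((M : ℝ) - 1)) • (G * Gᵀ)) *ᵥ v) =
        (h / ((M : ℝ) - 1)) * ((Gᵀ *ᵥ v) ⬝ᵥ (Gᵀ *ᵥ v)) := by
      rw [Matrix.smul_mulVec, dotProduct_smul, ← Matrix.mulVec_mulVec,
        Matrix.dotProduct_mulVec v G, ← Matrix.mulVec_transpose]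
      rfl
    rw [h1]
    exact mul_nonneg (div_nonneg hh hM1pos.le) (aux_dot_nonneg _)
  have hCS : ∀ v : Fin p → ℝ, v ⬝ᵥ (C *ᵥ v) ≤
      v ⬝ᵥ ((C + (h / ((M : ℝ) - 1)) • (G * Gᵀ)) *ᵥ v) := fun v => by
    rw [Matrix.add_mulVec, dotProduct_add]
    exact le_add_of_nonneg_right (hGGquad v)
  have hSpd : (C + (h / ((M : ℝ) - 1)) • (G * Gᵀ)).PosDef := by
    refine Matrix.PosDef.of_dotProduct_mulVec_pos hS.1 fun v hv => ?_
    have h1 : 0 < v ⬝ᵥ ((C + (h / ((M : ℝ) - 1)) • (G * Gᵀ)) *ᵥ v) :=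
      lt_of_lt_of_le (hCquad v hv) (hCS v)
    simpa [star_trivial] using h1
  have hSdet : IsUnit (C + (h / ((M : ℝ) - 1)) • (G * Gᵀ)).det :=
    isUnit_iff_ne_zero.mpr hSpd.det_pos.ne'
  -- coercivity
  have hcoC : ∀ v : Fin p → ℝ, v ⬝ᵥ v ≤ a * (v ⬝ᵥ (C *ᵥ v)) :=
    aux_coercive hC.posSemidef hCdet
  have hcoS : ∀ v : Fin p → ℝ, v ⬝ᵥ v ≤
      a * (v ⬝ᵥ ((C + (h / ((M : ℝ) - 1)) • (G * Gᵀ)) *ᵥ v)) := fun v =>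
    le_trans (hcoC v) (mul_le_mul_of_nonneg_left (hCS v) hapos.le)
  -- norms of inverse square roots
  have hRSinv : ‖(hS.sqrt)⁻¹‖ ≤ Real.sqrt a := aux_sqrt_inv_norm hS hSdet hapos.le hcoS
  have hRCinv : ‖(hC.posSemidef.sqrt)⁻¹‖ ≤ Real.sqrt a :=
    aux_sqrt_inv_norm hC.posSemidef hCdet hapos.le hcoC
  have hsqa_pos : 0 < Real.sqrt a := Real.sqrt_pos.mpr hapos
  -- lower bound on the quadratic form of R_C + R_S
  have hRCq : ∀ v : Fin p → ℝ, v ⬝ᵥ v ≤ Real.sqrt a * (v ⬝ᵥ (hC.posSemidef.sqrt *ᵥ v)) := by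
    intro v
    have h1 := aux_coercive hC.posSemidef.posSemidef_sqrt
      (aux_sqrt_det_isUnit hC.posSemidef hCdet) v
    have h2 : 0 ≤ v ⬝ᵥ (hC.posSemidef.sqrt *ᵥ v) := by
      simpa [star_trivial] using hC.posSemidef.posSemidef_sqrt.dotProduct_mulVec_nonneg v
    calc v ⬝ᵥ v ≤ ‖(hC.posSemidef.sqrt)⁻¹‖ * (v ⬝ᵥ (hC.posSemidef.sqrt *ᵥ v)) := h1
      _ ≤ Real.sqrt a * (v ⬝ᵥ (hC.posSemidef.sqrt *ᵥ v)) :=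
          mul_le_mul_of_nonneg_right hRCinv h2
  have hRSq : ∀ v : Fin p → ℝ, v ⬝ᵥ v ≤ Real.sqrt a * (v ⬝ᵥ (hS.sqrt *ᵥ v)) := by
    intro v
    have h1 := aux_coercive hS.posSemidef_sqrt (aux_sqrt_det_isUnit hS hSdet) v
    have h2 : 0 ≤ v ⬝ᵥ (hS.sqrt *ᵥ v) := by
      simpa [star_trivial] using hS.posSemidef_sqrt.dotProduct_mulVec_nonneg v
    calc v ⬝ᵥ v ≤ ‖(hS.sqrt)⁻¹‖ * (v ⬝ᵥ (hS.sqrt *ᵥ v)) := h1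
      _ ≤ Real.sqrt a * (v ⬝ᵥ (hS.sqrt *ᵥ v)) := mul_le_mul_of_nonneg_right hRSinv h2
  have hsumherm : (hC.posSemidef.sqrt + hS.sqrt).IsHermitian :=
    hC.posSemidef.posSemidef_sqrt.isHermitian.add hS.posSemidef_sqrt.isHermitian
  have hcpos : 0 < 2 / Real.sqrt a := by positivity
  have hsumq : ∀ v : Fin p → ℝ,
      (2 / Real.sqrt a) * (v ⬝ᵥ v) ≤ v ⬝ᵥ ((hC.posSemidef.sqrt + hS.sqrt) *ᵥ v) := by
    intro v
    rw [Matrix.add_mulVec, dotProduct_add]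
    have h1 := hRCq v
    have h2 := hRSq v
    rw [div_mul_eq_mul_div, div_le_iff₀ hsqa_pos]
    nlinarith [hsqa_pos]
  obtain ⟨-, hsuminv⟩ := aux_inv_norm_le hsumherm hcpos hsumq
  have hsuminv' : ‖(hC.posSemidef.sqrt + hS.sqrt)⁻¹‖ ≤ Real.sqrt a / 2 := by
    rw [inv_div] at hsuminv
    exact hsuminv
  -- norms of E and G
  have hEb : ‖E‖ ≤ Real.sqrt T := devMat_norm_le X
  have hGb : ‖G‖ ≤ (L : ℝ) * Real.sqrt T := by
    refine le_trans (devMat_norm_le (g ∘ X)) ?_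
    have h1 : ∑ i, ‖(g ∘ X) i - ensMean (g ∘ X)‖ ^ 2 ≤ (L : ℝ) ^ 2 * T := by
      refine le_trans (variance_min (by omega) (g ∘ X) (g (ensMean X))) ?_
      rw [hT, Finset.mul_sum]
      refine Finset.sum_le_sum fun i _ => ?_
      have h2 : ‖(g ∘ X) i - g (ensMean X)‖ ≤ (L : ℝ) * ‖X i - ensMean X‖ := by
        have := hg.dist_le_mul (X i) (ensMean X)
        rw [dist_eq_norm, dist_eq_norm] at this
        exact this
      calc ‖(g ∘ X) i - g (ensMean X)‖ ^ 2 ≤ ((L : ℝ) * ‖X i - ensMean X‖) ^ 2 :=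
            pow_le_pow_left₀ (norm_nonneg _) h2 2
        _ = (L : ℝ) ^ 2 * ‖X i - ensMean X‖ ^ 2 := by ring
    calc Real.sqrt (∑ i, ‖(g ∘ X) i - ensMean (g ∘ X)‖ ^ 2)
        ≤ Real.sqrt ((L : ℝ) ^ 2 * T) := Real.sqrt_le_sqrt h1
      _ = (L : ℝ) * Real.sqrt T := by
          rw [Real.sqrt_mul (sq_nonneg _), Real.sqrt_sq L.coe_nonneg]
  have hGTb : ‖Gᵀ‖ ≤ (L : ℝ) * Real.sqrt T := by
    rw [aux_transpose_eq_conjT, Matrix.l2_opNorm_conjTranspose]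
    exact hGb
  -- assemble
  have hsmul : ‖(((M : ℝ) - 1)⁻¹ • (E * Gᵀ))‖ = ((M : ℝ) - 1)⁻¹ * ‖E * Gᵀ‖ := by
    rw [norm_smul, Real.norm_eq_abs, abs_of_pos (by positivity)]
  have step1 : ‖(((M : ℝ) - 1)⁻¹ • (E * Gᵀ)) * (hS.sqrt)⁻¹ *
      (hC.posSemidef.sqrt + hS.sqrt)⁻¹‖ ≤
      (((M : ℝ) - 1)⁻¹ * ‖E * Gᵀ‖) * ‖(hS.sqrt)⁻¹‖ * ‖(hC.posSemidef.sqrt + hS.sqrt)⁻¹‖ := by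
    rw [← hsmul]
    exact le_trans (Matrix.l2_opNorm_mul _ _)
      (mul_le_mul_of_nonneg_right (Matrix.l2_opNorm_mul _ _) (norm_nonneg _))
  have hEG : ‖E * Gᵀ‖ ≤ Real.sqrt T * ((L : ℝ) * Real.sqrt T) :=
    le_trans (Matrix.l2_opNorm_mul _ _)
      (mul_le_mul hEb hGTb (norm_nonneg _) (Real.sqrt_nonneg _))
  have step2 : (((M : ℝ) - 1)⁻¹ * ‖E * Gᵀ‖) * ‖(hS.sqrt)⁻¹‖ *
      ‖(hC.posSemidef.sqrt + hS.sqrt)⁻¹‖ ≤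
      (((M : ℝ) - 1)⁻¹ * (Real.sqrt T * ((L : ℝ) * Real.sqrt T))) * Real.sqrt a *
        (Real.sqrt a / 2) := by
    have hn1 : (0:ℝ) ≤ ((M : ℝ) - 1)⁻¹ := inv_nonneg.mpr hM1pos.le
    gcongr
  have hfin : (((M : ℝ) - 1)⁻¹ * (Real.sqrt T * ((L : ℝ) * Real.sqrt T))) * Real.sqrt a *
      (Real.sqrt a / 2) = (1 / 2) * (L : ℝ) * a * trP X := by
    rw [htrP]
    have h1 : Real.sqrt T * Real.sqrt T = T := Real.mul_self_sqrt hTnn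
    have h2 : Real.sqrt a * Real.sqrt a = a := Real.mul_self_sqrt hapos.le
    calc (((M : ℝ) - 1)⁻¹ * (Real.sqrt T * ((L : ℝ) * Real.sqrt T))) * Real.sqrt a *
        (Real.sqrt a / 2)
        = ((M : ℝ) - 1)⁻¹ * (L : ℝ) * (Real.sqrt T * Real.sqrt T) *
          (Real.sqrt a * Real.sqrt a) / 2 := by ring
      _ = (1 / 2) * (L : ℝ) * a * (((M : ℝ) - 1)⁻¹ * T) := by rw [h1, h2]; ring
  calc ‖(((M : ℝ) - 1)⁻¹ • (E * Gᵀ)) * (hS.sqrt)⁻¹ * (hC.posSemidef.sqrt + hS.sqrt)⁻¹‖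
      ≤ (((M : ℝ) - 1)⁻¹ * ‖E * Gᵀ‖) * ‖(hS.sqrt)⁻¹‖ *
        ‖(hC.posSemidef.sqrt + hS.sqrt)⁻¹‖ := step1
    _ ≤ (((M : ℝ) - 1)⁻¹ * (Real.sqrt T * ((L : ℝ) * Real.sqrt T))) * Real.sqrt a *
        (Real.sqrt a / 2) := step2
    _ = (1 / 2) * (L : ℝ) * a * trP X := hfin
end

section
/- Let C ∈ ℝ^{p×p} be symmetric positive definite and D ∈ ℝ^{p×p} symmetric positive semidefinite. Then, with square roots denoting the positive semidefinite matrix square roots, the spectral norm satisfies ‖(C+D)^{−1/2} (C^{1/2} + (C+D)^{1/2})⁻¹‖ ≤ (1/2) ‖C⁻¹‖, where (C+D)^{−1/2} := ((C+D)^{1/2})⁻¹. -/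
open Matrix MeasureTheory
open scoped Matrix.Norms.L2Operator MatrixOrder NNReal RealInnerProductSpace

section SqrtResolventAux

noncomputable abbrev toE {p : ℕ} (v : Fin p → ℝ) : EuclideanSpace ℝ (Fin p) :=
  (EuclideanSpace.equiv (Fin p) ℝ).symm v


variable {p : ℕ}

lemma inner_toE_toE (x y : Fin p → ℝ) : ⟪toE x, toE y⟫ = x ⬝ᵥ y := by
  simp [PiLp.inner_apply, dotProduct, RCLike.inner_apply, EuclideanSpace.equiv]
  exact Finset.sum_congr rfl fun i _ => mul_comm _ _

lemma norm_toE_sq (x : Fin p → ℝ) : ‖toE x‖ ^ 2 = x ⬝ᵥ x := by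
  rw [← real_inner_self_eq_norm_sq, inner_toE_toE]

lemma dot_mulVec_mulVec (S T : Matrix (Fin p) (Fin p) ℝ) (x : Fin p → ℝ) :
    (S *ᵥ x) ⬝ᵥ (T *ᵥ x) = x ⬝ᵥ ((Sᵀ * T) *ᵥ x) := by
  calc (S *ᵥ x) ⬝ᵥ (T *ᵥ x) = (x ᵥ* Sᵀ) ⬝ᵥ (T *ᵥ x) := by rw [vecMul_transpose]
    _ = x ⬝ᵥ Sᵀ *ᵥ (T *ᵥ x) := (dotProduct_mulVec _ _ _).symm
    _ = x ⬝ᵥ ((Sᵀ * T) *ᵥ x) := by rw [mulVec_mulVec]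

lemma posDef_sqrt {P : Matrix (Fin p) (Fin p) ℝ} (hP : P.PosDef) :
    (CFC.sqrt P).PosDef := by
  set S := CFC.sqrt P with hSdef
  have hS : S.PosSemidef := (CFC.sqrt_nonneg P).posSemidef
  refine .of_dotProduct_mulVec_pos hS.1 fun x hx => ?_
  rcases lt_or_eq_of_le (hS.dotProduct_mulVec_nonneg x) with h | h
  · simpa using h
  · exfalso
    have h0 : S *ᵥ x = 0 := (hS.dotProduct_mulVec_zero_iff x).mp h.symm
    have : P *ᵥ x = 0 := by
      rw [← CFC.sqrt_mul_sqrt_self P hP.posSemidef.nonneg, ← mulVec_mulVec, h0, mulVec_zero]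
    have h2 := hP.dotProduct_mulVec_pos hx
    rw [this, dotProduct_zero] at h2
    exact lt_irrefl 0 h2

lemma rayleigh {P : Matrix (Fin p) (Fin p) ℝ} (hP : P.PosDef) (x : Fin p → ℝ) :
    x ⬝ᵥ x ≤ ‖P⁻¹‖ * (x ⬝ᵥ (P *ᵥ x)) := by
  set S := CFC.sqrt P with hSdef
  have hSpd : S.PosDef := posDef_sqrt hP
  have hSsym : Sᵀ = S := by
    rw [← conjTranspose_eq_transpose_of_trivial]; exact hSpd.1
  have hdet : IsUnit S.det := (isUnit_iff_isUnit_det S).mp hSpd.isUnit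
  have hSS : S * S = P := CFC.sqrt_mul_sqrt_self P hP.posSemidef.nonneg
  have hSinv : S * S⁻¹ = 1 := mul_nonsing_inv _ hdet
  have hSTinv : (S⁻¹)ᵀ = S⁻¹ := by rw [transpose_nonsing_inv, hSsym]
  have hPinv : S⁻¹ * S⁻¹ = P⁻¹ := by rw [← hSS, Matrix.mul_inv_rev]
  have key1 : (S *ᵥ x) ⬝ᵥ (S⁻¹ *ᵥ x) = x ⬝ᵥ x := by
    rw [dot_mulVec_mulVec, hSsym, hSinv, one_mulVec]
  have key2 : (S *ᵥ x) ⬝ᵥ (S *ᵥ x) = x ⬝ᵥ (P *ᵥ x) := by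
    rw [dot_mulVec_mulVec, hSsym, hSS]
  have key3 : (S⁻¹ *ᵥ x) ⬝ᵥ (S⁻¹ *ᵥ x) = x ⬝ᵥ (P⁻¹ *ᵥ x) := by
    rw [dot_mulVec_mulVec, hSTinv, hPinv]
  set a := ‖toE (S *ᵥ x)‖ with ha'
  set b := ‖toE (S⁻¹ *ᵥ x)‖ with hb'
  set t := ‖toE x‖ with ht'
  have h1 : t ^ 2 ≤ a * b := by
    rw [ht', norm_toE_sq, ← key1, ← inner_toE_toE]
    exact real_inner_le_norm _ _
  have h2 : a ^ 2 = x ⬝ᵥ (P *ᵥ x) := by rw [ha', norm_toE_sq, key2]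
  have h3 : b ^ 2 ≤ ‖P⁻¹‖ * t ^ 2 := by
    have e1 : b ^ 2 = x ⬝ᵥ (P⁻¹ *ᵥ x) := by rw [hb', norm_toE_sq, key3]
    have e2 : x ⬝ᵥ (P⁻¹ *ᵥ x) = ⟪toE x, toE (P⁻¹ *ᵥ x)⟫ := (inner_toE_toE _ _).symm
    have e3 : ⟪toE x, toE (P⁻¹ *ᵥ x)⟫ ≤ t * ‖toE (P⁻¹ *ᵥ x)‖ := real_inner_le_norm _ _
    have e4 : ‖toE (P⁻¹ *ᵥ x)‖ ≤ ‖P⁻¹‖ * t := P⁻¹.l2_opNorm_mulVec (toE x)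
    have ht0 : 0 ≤ t := norm_nonneg _
    nlinarith [norm_nonneg (toE (P⁻¹ *ᵥ x))]
  have hx2 : x ⬝ᵥ x = t ^ 2 := (norm_toE_sq x).symm
  rw [hx2, ← h2]
  have ha0 : 0 ≤ a := norm_nonneg _
  have hb0 : 0 ≤ b := norm_nonneg _
  have ht0 : 0 ≤ t := norm_nonneg _
  have hk0 : 0 ≤ ‖P⁻¹‖ := norm_nonneg _
  have h4 : t^2 * t^2 ≤ (a*b) * (a*b) := mul_le_mul h1 h1 (sq_nonneg t) (mul_nonneg ha0 hb0)
  have h5 : a^2 * b^2 ≤ a^2 * (‖P⁻¹‖ * t^2) := mul_le_mul_of_nonneg_left h3 (sq_nonneg a)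
  nlinarith [sq_nonneg t, sq_nonneg a, mul_nonneg hk0 (sq_nonneg a)]

lemma inv_opNorm_le {N : Matrix (Fin p) (Fin p) ℝ} (hN : IsUnit N.det) {c : ℝ} (hc : 0 ≤ c)
    (h : ∀ x : Fin p → ℝ, ‖toE x‖ ≤ c * ‖toE (N *ᵥ x)‖) : ‖N⁻¹‖ ≤ c := by
  rw [Matrix.l2_opNorm_def]
  refine ContinuousLinearMap.opNorm_le_bound _ hc fun y => ?_
  show ‖toE (N⁻¹ *ᵥ y)‖ ≤ c * ‖y‖
  have key : N *ᵥ (N⁻¹ *ᵥ (y : Fin p → ℝ)) = y := by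
    rw [mulVec_mulVec, mul_nonsing_inv _ hN, one_mulVec]
  calc ‖toE (N⁻¹ *ᵥ y)‖ ≤ c * ‖toE (N *ᵥ (N⁻¹ *ᵥ y))‖ := h _
    _ = c * ‖y‖ := by rw [key]; rfl

lemma div_helper1 {t m c : ℝ} (ht : 0 ≤ t) (hm : 0 ≤ m) (hc : 0 ≤ c)
    (h : t ^ 2 ≤ c * (t * m)) : t ≤ c * m := by
  rcases ht.eq_or_lt with h0 | h0
  · rw [← h0]; exact mul_nonneg hc hm
  · have h2 : t * t ≤ (c * m) * t := by nlinarith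
    exact le_of_mul_le_mul_right h2 h0

lemma div_helper2 {t m c : ℝ} (ht : 0 ≤ t) (hm : 0 ≤ m) (hc : 0 ≤ c)
    (h : t ^ 2 ≤ (c * m) ^ 2) : t ≤ c * m := by
  have := Real.sqrt_le_sqrt h
  rwa [Real.sqrt_sq ht, Real.sqrt_sq (mul_nonneg hc hm)] at this

lemma div_helper3 {t m a : ℝ} (ht : 0 ≤ t) (hm : 0 ≤ m) (ha : 0 ≤ a)
    (h : 2 * t ^ 2 ≤ a * (t * m)) : t ≤ (a / 2) * m := by
  rcases ht.eq_or_lt with h0 | h0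
  · rw [← h0]; positivity
  · have h2 : (2 * t) * t ≤ (a * m) * t := by nlinarith
    have := le_of_mul_le_mul_right h2 h0
    linarith


end SqrtResolventAux

/-- `‖(C+D)^{−1/2} (C^{1/2} + (C+D)^{1/2})⁻¹‖ ≤ (1/2) ‖C⁻¹‖` for
`C` symmetric positive definite and `D` symmetric positive semidefinite. -/
theorem sqrt_resolvent_product_bound {p : ℕ} (C D : Matrix (Fin p) (Fin p) ℝ)
    (hC : C.PosDef) (hD : D.PosSemidef) :
    ‖(CFC.sqrt (C + D))⁻¹ * (CFC.sqrt C + CFC.sqrt (C + D))⁻¹‖ ≤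
      (1 / 2) * ‖C⁻¹‖ := by
  have hCD : (C + D).PosDef := hC.add_posSemidef hD
  set A := CFC.sqrt C with hAdef
  set B := CFC.sqrt (C + D) with hBdef
  have hApd : A.PosDef := posDef_sqrt hC
  have hBpd : B.PosDef := posDef_sqrt hCD
  have hAA : A * A = C := CFC.sqrt_mul_sqrt_self C hC.posSemidef.nonneg
  have hBB : B * B = C + D := CFC.sqrt_mul_sqrt_self (C + D) hCD.posSemidef.nonneg
  have hAsym : Aᵀ = A := by rw [← conjTranspose_eq_transpose_of_trivial]; exact hApd.1
  have hBsym : Bᵀ = B := by rw [← conjTranspose_eq_transpose_of_trivial]; exact hBpd.1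
  set a := ‖A⁻¹‖ with ha'
  have ha0 : 0 ≤ a := norm_nonneg _
  -- ‖C⁻¹‖ = a * a
  have hk : ‖C⁻¹‖ = a * a := by
    have h1 : C⁻¹ = (A⁻¹)ᴴ * A⁻¹ := by
      rw [conjTranspose_nonsing_inv, hApd.1, ← hAA, Matrix.mul_inv_rev]
    rw [h1, Matrix.l2_opNorm_conjTranspose_mul_self]
  -- step α : ‖(C+D)⁻¹‖ ≤ ‖C⁻¹‖
  have hα : ‖(C + D)⁻¹‖ ≤ ‖C⁻¹‖ := by
    refine inv_opNorm_le ((isUnit_iff_isUnit_det _).mp hCD.isUnit) (norm_nonneg _) fun x => ?_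
    have hray := rayleigh hC x
    have hDnn : 0 ≤ x ⬝ᵥ D *ᵥ x := by simpa using hD.dotProduct_mulVec_nonneg x
    have hsum : x ⬝ᵥ (C + D) *ᵥ x = x ⬝ᵥ C *ᵥ x + x ⬝ᵥ D *ᵥ x := by
      rw [add_mulVec, dotProduct_add]
    have hCS : x ⬝ᵥ (C + D) *ᵥ x ≤ ‖toE x‖ * ‖toE ((C + D) *ᵥ x)‖ := by
      rw [← inner_toE_toE]; exact real_inner_le_norm _ _
    refine div_helper1 (norm_nonneg _) (norm_nonneg _) (norm_nonneg _) ?_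
    rw [norm_toE_sq]
    calc x ⬝ᵥ x ≤ ‖C⁻¹‖ * (x ⬝ᵥ C *ᵥ x) := hray
      _ ≤ ‖C⁻¹‖ * (x ⬝ᵥ (C + D) *ᵥ x) := by
          apply mul_le_mul_of_nonneg_left _ (norm_nonneg _); rw [hsum]; linarith
      _ ≤ ‖C⁻¹‖ * (‖toE x‖ * ‖toE ((C + D) *ᵥ x)‖) :=
          mul_le_mul_of_nonneg_left hCS (norm_nonneg _)
  -- step β : ‖B⁻¹‖ ≤ a
  have hβ : ‖B⁻¹‖ ≤ a := by
    refine inv_opNorm_le ((isUnit_iff_isUnit_det _).mp hBpd.isUnit) ha0 fun x => ?_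
    have hray := rayleigh hCD x
    have hBx : x ⬝ᵥ (C + D) *ᵥ x = ‖toE (B *ᵥ x)‖ ^ 2 := by
      rw [norm_toE_sq, dot_mulVec_mulVec, hBsym, hBB]
    refine div_helper2 (norm_nonneg _) (norm_nonneg _) ha0 ?_
    rw [norm_toE_sq]
    calc x ⬝ᵥ x ≤ ‖(C + D)⁻¹‖ * (x ⬝ᵥ (C + D) *ᵥ x) := hray
      _ ≤ ‖C⁻¹‖ * (x ⬝ᵥ (C + D) *ᵥ x) := by
          apply mul_le_mul_of_nonneg_right hα
          rw [hBx]; positivity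
      _ = (a * ‖toE (B *ᵥ x)‖) ^ 2 := by rw [hBx, hk]; ring
  -- step γ : ‖(A+B)⁻¹‖ ≤ a / 2
  have hγ : ‖(A + B)⁻¹‖ ≤ a / 2 := by
    have hABpd : (A + B).PosDef := hApd.add hBpd
    refine inv_opNorm_le ((isUnit_iff_isUnit_det _).mp hABpd.isUnit) (by linarith) fun x => ?_
    have hray1 := rayleigh hApd x
    have hray2 := rayleigh hBpd x
    have hB2 : ‖B⁻¹‖ * (x ⬝ᵥ B *ᵥ x) ≤ a * (x ⬝ᵥ B *ᵥ x) := by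
      apply mul_le_mul_of_nonneg_right hβ
      simpa using hBpd.posSemidef.dotProduct_mulVec_nonneg x
    have hsum : x ⬝ᵥ (A + B) *ᵥ x = x ⬝ᵥ A *ᵥ x + x ⬝ᵥ B *ᵥ x := by
      rw [add_mulVec, dotProduct_add]
    have hCS : x ⬝ᵥ (A + B) *ᵥ x ≤ ‖toE x‖ * ‖toE ((A + B) *ᵥ x)‖ := by
      rw [← inner_toE_toE]; exact real_inner_le_norm _ _
    refine div_helper3 (norm_nonneg _) (norm_nonneg _) ha0 ?_
    have ht2 : ‖toE x‖ ^ 2 = x ⬝ᵥ x := norm_toE_sq x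
    have step : 2 * (x ⬝ᵥ x) ≤ a * (x ⬝ᵥ (A + B) *ᵥ x) := by
      rw [hsum, mul_add]; linarith
    calc 2 * ‖toE x‖ ^ 2 = 2 * (x ⬝ᵥ x) := by rw [ht2]
      _ ≤ a * (x ⬝ᵥ (A + B) *ᵥ x) := step
      _ ≤ a * (‖toE x‖ * ‖toE ((A + B) *ᵥ x)‖) := mul_le_mul_of_nonneg_left hCS ha0
  -- assemble
  calc ‖B⁻¹ * (A + B)⁻¹‖ ≤ ‖B⁻¹‖ * ‖(A + B)⁻¹‖ := Matrix.l2_opNorm_mul _ _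
    _ ≤ a * (a / 2) := mul_le_mul hβ hγ (norm_nonneg _) ha0
    _ = (1 / 2) * ‖C⁻¹‖ := by rw [hk]; ring
end

section
/- (Lemma 4.1, difference of discrete and continuous Kalman gains.) Let g : ℝ^d → ℝ^p be Lipschitz with constant L and C ∈ ℝ^{p×p} symmetric positive definite. There exists a constant κ > 0, depending only on L and ‖C⁻¹‖, such that for every M ≥ 2, every h ≥ 0 and any two ensembles X^(1),…,X^(M) and Y^(1),…,Y^(M) in ℝ^d, the discrete gain K_X := (1/(M−1)) E_X 𝒢_Xᵀ (C + (h/(M−1)) 𝒢_X 𝒢_Xᵀ)⁻¹ and the continuous gain K_Y := (1/(M−1)) E_Y 𝒢_Yᵀ C⁻¹ satisfy ‖K_X − K_Y‖ ≤ κ ( h · tr(P_X)² + (tr(P_X)^{1/2} + tr(P_Y)^{1/2}) · ((1/(M−1)) Σ_{i=1}^M ‖X^(i) − Y^(i)‖²)^{1/2} ). -/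
open Matrix MeasureTheory
open scoped Matrix.Norms.L2Operator NNReal RealInnerProductSpace

/- ## Auxiliary lemmas -/

lemma eucl_norm_sq {k : ℕ} (w : EuclideanSpace ℝ (Fin k)) : ‖w‖ ^ 2 = ∑ j, w j ^ 2 := by
  rw [EuclideanSpace.norm_eq, Real.sq_sqrt (by positivity)]
  simp [sq_abs]

lemma eucl_norm_eq {k : ℕ} (w : EuclideanSpace ℝ (Fin k)) : ‖w‖ = Real.sqrt (∑ j, w j ^ 2) := by
  rw [← eucl_norm_sq w, Real.sqrt_sq (norm_nonneg w)]

lemma opNorm_le_of_mulVec {m n : ℕ} (A : Matrix (Fin m) (Fin n) ℝ) {c : ℝ} (hc : 0 ≤ c)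
    (h : ∀ x : Fin n → ℝ,
      Real.sqrt (∑ j, (A *ᵥ x) j ^ 2) ≤ c * Real.sqrt (∑ i, x i ^ 2)) :
    ‖A‖ ≤ c := by
  rw [Matrix.l2_opNorm_def]
  refine ContinuousLinearMap.opNorm_le_bound _ hc fun x => ?_
  have h1 : ((Matrix.toEuclideanLin.trans LinearMap.toContinuousLinearMap) A) x
      = (WithLp.equiv 2 (Fin m → ℝ)).symm (A *ᵥ (WithLp.equiv 2 (Fin n → ℝ)) x) := by
    simp [Matrix.toEuclideanLin_apply]
  rw [h1, eucl_norm_eq, eucl_norm_eq]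
  simpa using h ((WithLp.equiv 2 (Fin n → ℝ)) x)

lemma mulVec_norm_le {m n : ℕ} (A : Matrix (Fin m) (Fin n) ℝ) (x : Fin n → ℝ) :
    Real.sqrt (∑ j, (A *ᵥ x) j ^ 2) ≤ ‖A‖ * Real.sqrt (∑ i, x i ^ 2) := by
  have := Matrix.l2_opNorm_mulVec A ((WithLp.equiv 2 (Fin n → ℝ)).symm x)
  rw [eucl_norm_eq, eucl_norm_eq] at this
  simpa using this

lemma norm_le_frobenius {m n : ℕ} (A : Matrix (Fin m) (Fin n) ℝ) :
    ‖A‖ ≤ Real.sqrt (∑ j, ∑ i, A j i ^ 2) := by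
  refine opNorm_le_of_mulVec A (Real.sqrt_nonneg _) fun x => ?_
  rw [← Real.sqrt_mul (by positivity)]
  apply Real.sqrt_le_sqrt
  rw [Finset.sum_mul]
  refine Finset.sum_le_sum fun j _ => ?_
  simpa [Matrix.mulVec, dotProduct] using
    Finset.sum_mul_sq_le_sq_mul_sq Finset.univ (fun i => A j i) x

lemma psd_nonneg {n : ℕ} {A : Matrix (Fin n) (Fin n) ℝ} (hA : A.PosSemidef) (x : Fin n → ℝ) :
    0 ≤ x ⬝ᵥ A *ᵥ x := by simpa using hA.dotProduct_mulVec_nonneg x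

lemma cs_posdef {p : ℕ} {C : Matrix (Fin p) (Fin p) ℝ} (hC : C.PosDef) (x y : Fin p → ℝ) :
    (x ⬝ᵥ C *ᵥ y) ^ 2 ≤ (x ⬝ᵥ C *ᵥ x) * (y ⬝ᵥ C *ᵥ y) := by
  have hCt : Cᵀ = C := by
    rw [← Matrix.conjTranspose_eq_transpose_of_trivial]; exact hC.isHermitian.eq
  have hsym : ∀ a b : Fin p → ℝ, a ⬝ᵥ C *ᵥ b = b ⬝ᵥ C *ᵥ a := fun a b => by
    rw [Matrix.dotProduct_mulVec, ← Matrix.mulVec_transpose, hCt, dotProduct_comm]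
  by_cases hy0 : y = 0
  · simp [hy0]
  · set s := x ⬝ᵥ C *ᵥ y with hs
    set q := y ⬝ᵥ C *ᵥ y with hq
    set r := x ⬝ᵥ C *ᵥ x with hr
    have hq0 : 0 < q := by simpa using hC.dotProduct_mulVec_pos hy0
    have h0 : 0 ≤ (q • x - s • y) ⬝ᵥ C *ᵥ (q • x - s • y) :=
      psd_nonneg hC.posSemidef _
    have hyx : y ⬝ᵥ C *ᵥ x = s := hsym y x
    simp only [Matrix.mulVec_sub, Matrix.mulVec_smul, sub_dotProduct,
      dotProduct_sub, smul_dotProduct, dotProduct_smul,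
      smul_eq_mul, ← hs, ← hq, ← hr, hyx] at h0
    nlinarith [h0, hq0]

lemma psd_smul {n : ℕ} {A : Matrix (Fin n) (Fin n) ℝ} (hA : A.PosSemidef) {s : ℝ} (hs : 0 ≤ s) :
    (s • A).PosSemidef := by
  exact hA.smul hs

lemma quad_lower {p : ℕ} {C : Matrix (Fin p) (Fin p) ℝ} (hC : C.PosDef) (w : Fin p → ℝ) :
    ∑ j, w j ^ 2 ≤ ‖C⁻¹‖ * (w ⬝ᵥ C *ᵥ w) := by
  have hdet : IsUnit C.det := hC.det_pos.ne'.isUnit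
  have hCu : C * C⁻¹ = 1 := Matrix.mul_nonsing_inv _ hdet
  have hcs := cs_posdef hC w (C⁻¹ *ᵥ w)
  have h1 : C *ᵥ (C⁻¹ *ᵥ w) = w := by rw [Matrix.mulVec_mulVec, hCu, Matrix.one_mulVec]
  rw [h1] at hcs
  set S := ∑ j, w j ^ 2 with hS
  have hSw : w ⬝ᵥ w = S := by simp [dotProduct, hS, sq]
  rw [hSw] at hcs
  have hS0 : 0 ≤ S := by positivity
  have h2 : (C⁻¹ *ᵥ w) ⬝ᵥ w ≤ ‖C⁻¹‖ * S := by
    have hcs2 := Finset.sum_mul_sq_le_sq_mul_sq Finset.univ (fun j => (C⁻¹ *ᵥ w) j) w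
    have hmv := mulVec_norm_le C⁻¹ w
    have h3 : Real.sqrt (∑ j, (C⁻¹ *ᵥ w) j ^ 2) * Real.sqrt S
        ≤ (‖C⁻¹‖ * Real.sqrt S) * Real.sqrt S :=
      mul_le_mul_of_nonneg_right (by simpa [hS] using hmv) (Real.sqrt_nonneg _)
    have h4 : (C⁻¹ *ᵥ w) ⬝ᵥ w ≤ Real.sqrt (∑ j, (C⁻¹ *ᵥ w) j ^ 2) * Real.sqrt S := by
      rw [← Real.sqrt_mul (by positivity)]
      calc (C⁻¹ *ᵥ w) ⬝ᵥ w ≤ |(C⁻¹ *ᵥ w) ⬝ᵥ w| := le_abs_self _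
        _ = Real.sqrt (((C⁻¹ *ᵥ w) ⬝ᵥ w) ^ 2) := (Real.sqrt_sq_eq_abs _).symm
        _ ≤ _ := Real.sqrt_le_sqrt (by simpa [hS, dotProduct] using hcs2)
    calc (C⁻¹ *ᵥ w) ⬝ᵥ w ≤ (‖C⁻¹‖ * Real.sqrt S) * Real.sqrt S := le_trans h4 h3
      _ = ‖C⁻¹‖ * (Real.sqrt S * Real.sqrt S) := by ring
      _ = ‖C⁻¹‖ * S := by rw [Real.mul_self_sqrt hS0]
  have hq : 0 ≤ w ⬝ᵥ C *ᵥ w := psd_nonneg hC.posSemidef w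
  rcases eq_or_lt_of_le hS0 with h0 | h0
  · rw [← h0]; positivity
  · nlinarith [hcs, h2, hq]

lemma inv_norm_le {p : ℕ} {C B : Matrix (Fin p) (Fin p) ℝ} (hC : C.PosDef) (hB : B.PosDef)
    (hle : ∀ w : Fin p → ℝ, w ⬝ᵥ C *ᵥ w ≤ w ⬝ᵥ B *ᵥ w) : ‖B⁻¹‖ ≤ ‖C⁻¹‖ := by
  refine opNorm_le_of_mulVec _ (norm_nonneg _) fun x => ?_
  set w := B⁻¹ *ᵥ x with hw
  have hBu : B * B⁻¹ = 1 := Matrix.mul_nonsing_inv _ hB.det_pos.ne'.isUnit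
  have hBw : B *ᵥ w = x := by rw [hw, Matrix.mulVec_mulVec, hBu, Matrix.one_mulVec]
  set S := ∑ j, w j ^ 2 with hS
  set T := ∑ i, x i ^ 2 with hT
  have hS0 : 0 ≤ S := by positivity
  have hT0 : 0 ≤ T := by positivity
  have h1 : S ≤ ‖C⁻¹‖ * (w ⬝ᵥ x) := by
    have hql := quad_lower hC w
    have h2 : w ⬝ᵥ C *ᵥ w ≤ w ⬝ᵥ x := by rw [← hBw]; exact hle w
    calc S ≤ ‖C⁻¹‖ * (w ⬝ᵥ C *ᵥ w) := hql
      _ ≤ ‖C⁻¹‖ * (w ⬝ᵥ x) := mul_le_mul_of_nonneg_left h2 (norm_nonneg _)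
  have h3 : w ⬝ᵥ x ≤ Real.sqrt S * Real.sqrt T := by
    have hcs := Finset.sum_mul_sq_le_sq_mul_sq Finset.univ w x
    rw [← Real.sqrt_mul hS0]
    calc w ⬝ᵥ x ≤ |w ⬝ᵥ x| := le_abs_self _
      _ = Real.sqrt ((w ⬝ᵥ x) ^ 2) := (Real.sqrt_sq_eq_abs _).symm
      _ ≤ _ := Real.sqrt_le_sqrt (by simpa [hS, hT, dotProduct] using hcs)
  have hsq : Real.sqrt S * Real.sqrt S = S := Real.mul_self_sqrt hS0
  rcases eq_or_lt_of_le (Real.sqrt_nonneg S) with h0 | h0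
  · rw [← h0]; positivity
  · have h4 : Real.sqrt S * Real.sqrt S ≤ ‖C⁻¹‖ * (Real.sqrt S * Real.sqrt T) := by
      rw [hsq]
      calc S ≤ ‖C⁻¹‖ * (w ⬝ᵥ x) := h1
        _ ≤ ‖C⁻¹‖ * (Real.sqrt S * Real.sqrt T) :=
            mul_le_mul_of_nonneg_left h3 (norm_nonneg _)
    nlinarith [h4, h0]

lemma sum_dev_le {k M : ℕ} (hM : (M : ℝ) ≠ 0) (Z : Fin M → EuclideanSpace ℝ (Fin k))
    (b : EuclideanSpace ℝ (Fin k)) :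
    ∑ i, ‖Z i - ensMean Z‖ ^ 2 ≤ ∑ i, ‖Z i - b‖ ^ 2 := by
  set c := ensMean Z - b with hc
  have hsum : ∑ i, (Z i - b) = (M : ℝ) • c := by
    rw [hc, smul_sub, ensMean, smul_smul, mul_inv_cancel₀ hM, one_smul,
      Finset.sum_sub_distrib, Finset.sum_const, Finset.card_univ, Fintype.card_fin]
    congr 1
    exact (Nat.cast_smul_eq_nsmul ℝ M b).symm
  have key : ∑ i, ⟪Z i - b, c⟫ = (M : ℝ) * ‖c‖ ^ 2 := by
    rw [← sum_inner, hsum, real_inner_smul_left, real_inner_self_eq_norm_sq]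
  have expand : ∀ i, ‖Z i - ensMean Z‖ ^ 2 = ‖Z i - b‖ ^ 2 - 2 * ⟪Z i - b, c⟫ + ‖c‖ ^ 2 := by
    intro i
    have : Z i - ensMean Z = (Z i - b) - c := by rw [hc, sub_sub_sub_cancel_right]
    rw [this, norm_sub_sq_real]
  calc ∑ i, ‖Z i - ensMean Z‖ ^ 2
      = ∑ i, (‖Z i - b‖ ^ 2 - 2 * ⟪Z i - b, c⟫ + ‖c‖ ^ 2) :=
        Finset.sum_congr rfl fun i _ => expand i
    _ = ∑ i, ‖Z i - b‖ ^ 2 - 2 * ((M : ℝ) * ‖c‖ ^ 2) + (M : ℝ) * ‖c‖ ^ 2 := by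
        rw [Finset.sum_add_distrib, Finset.sum_sub_distrib, Finset.sum_const,
          Finset.card_univ, Fintype.card_fin, ← Finset.mul_sum, key, nsmul_eq_mul]
    _ = ∑ i, ‖Z i - b‖ ^ 2 - (M : ℝ) * ‖c‖ ^ 2 := by ring
    _ ≤ ∑ i, ‖Z i - b‖ ^ 2 := by
        have : 0 ≤ (M : ℝ) * ‖c‖ ^ 2 := by positivity
        linarith

lemma norm_devMat_le {k M : ℕ} (V : Fin M → EuclideanSpace ℝ (Fin k)) :
    ‖devMat V‖ ≤ Real.sqrt (∑ i, ‖V i - ensMean V‖ ^ 2) := by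
  refine le_trans (norm_le_frobenius _) (le_of_eq ?_)
  congr 1
  rw [Finset.sum_comm]
  exact Finset.sum_congr rfl fun i _ => by
    rw [eucl_norm_sq]
    rfl

lemma devMat_sub {k M : ℕ} (X Y : Fin M → EuclideanSpace ℝ (Fin k)) :
    devMat X - devMat Y = devMat (fun i => X i - Y i) := by
  have hmean : ensMean (fun i => X i - Y i) = ensMean X - ensMean Y := by
    simp [ensMean, Finset.sum_sub_distrib, smul_sub]
  ext j i
  simp [devMat, hmean, Matrix.sub_apply]
  ring

set_option maxHeartbeats 1000000 in
/-- Lemma 4.1, difference of discrete and continuous Kalman gains: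
there is a constant `κ > 0` (depending only on the Lipschitz constant `L` of `g` and
`‖C⁻¹‖`) such that for all ensemble sizes `M ≥ 2`, all `h ≥ 0` and all ensembles `X, Y`,
`‖K_X − K_Y‖ ≤ κ (h tr(P_X)² + (tr(P_X)^{1/2} + tr(P_Y)^{1/2})
((1/(M−1)) ∑ᵢ ‖X⁽ⁱ⁾ − Y⁽ⁱ⁾‖²)^{1/2})`. -/
theorem kalman_gain_difference_bound {d p : ℕ} (L : ℝ≥0)
    (g : EuclideanSpace ℝ (Fin d) → EuclideanSpace ℝ (Fin p)) (hg : LipschitzWith L g)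
    (C : Matrix (Fin p) (Fin p) ℝ) (hC : C.PosDef) :
    ∃ κ : ℝ, 0 < κ ∧ ∀ (M : ℕ), 2 ≤ M → ∀ h : ℝ, 0 ≤ h →
      ∀ X Y : Fin M → EuclideanSpace ℝ (Fin d),
      ‖(((M : ℝ) - 1)⁻¹ • (devMat X * (devMat (g ∘ X))ᵀ)) *
            (C + (h / ((M : ℝ) - 1)) • (devMat (g ∘ X) * (devMat (g ∘ X))ᵀ))⁻¹ -
          ((M : ℝ) - 1)⁻¹ • (devMat Y * (devMat (g ∘ Y))ᵀ * C⁻¹)‖ ≤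
        κ * (h * trP X ^ 2 + (Real.sqrt (trP X) + Real.sqrt (trP Y)) *
          Real.sqrt (((M : ℝ) - 1)⁻¹ * ∑ i, ‖X i - Y i‖ ^ 2)) := by
  set c := ‖C⁻¹‖ with hcdef
  have hc0 : 0 ≤ c := norm_nonneg _
  set Lr := (L : ℝ) with hLdef
  have hL0 : 0 ≤ Lr := L.coe_nonneg
  refine ⟨Lr ^ 3 * c ^ 2 + Lr * c + 1, by positivity, ?_⟩
  intro M hM h hh X Y
  have hM2 : (2 : ℝ) ≤ (M : ℝ) := by exact_mod_cast hM
  have hm1 : (0 : ℝ) < (M : ℝ) - 1 := by linarith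
  set m1 := (M : ℝ) - 1 with hm1def
  have hMne : (M : ℝ) ≠ 0 := by positivity
  set sm := Real.sqrt m1 with hsmdef
  have hsm : sm * sm = m1 := Real.mul_self_sqrt hm1.le
  have hsm0 : 0 < sm := Real.sqrt_pos.mpr hm1
  have hm1e : m1 = sm * sm := hsm.symm
  -- Lipschitz in norm form
  have hlip : ∀ x y, ‖g x - g y‖ ≤ Lr * ‖x - y‖ := fun x y => by
    have := hg.dist_le_mul x y
    rwa [dist_eq_norm, dist_eq_norm] at this
  -- trace nonnegativity and sums
  have htrX : 0 ≤ trP X := by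
    rw [trP, ← hm1def]
    exact mul_nonneg (inv_nonneg.mpr hm1.le) (Finset.sum_nonneg fun i _ => by positivity)
  have htrY : 0 ≤ trP Y := by
    rw [trP, ← hm1def]
    exact mul_nonneg (inv_nonneg.mpr hm1.le) (Finset.sum_nonneg fun i _ => by positivity)
  set a := Real.sqrt (trP X) with hadef
  set b := Real.sqrt (trP Y) with hbdef
  set e := Real.sqrt (m1⁻¹ * ∑ i, ‖X i - Y i‖ ^ 2) with hedef
  have ha0 : 0 ≤ a := Real.sqrt_nonneg _
  have hb0 : 0 ≤ b := Real.sqrt_nonneg _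
  have he0 : 0 ≤ e := Real.sqrt_nonneg _
  have ha2 : a ^ 2 = trP X := Real.sq_sqrt htrX
  have hsumX : ∑ i, ‖X i - ensMean X‖ ^ 2 = m1 * trP X := by
    rw [trP, ← hm1def, ← mul_assoc, mul_inv_cancel₀ hm1.ne', one_mul]
  have hsumY : ∑ i, ‖Y i - ensMean Y‖ ^ 2 = m1 * trP Y := by
    rw [trP, ← hm1def, ← mul_assoc, mul_inv_cancel₀ hm1.ne', one_mul]
  have hsumE : ∑ i, ‖X i - Y i‖ ^ 2 = m1 * (m1⁻¹ * ∑ i, ‖X i - Y i‖ ^ 2) := by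
    rw [← mul_assoc, mul_inv_cancel₀ hm1.ne', one_mul]
  -- norm bounds on the deviation matrices
  have hEX : ‖devMat X‖ ≤ sm * a := by
    refine le_trans (norm_devMat_le X) ?_
    rw [hsumX, Real.sqrt_mul hm1.le]
  have hEY : ‖devMat Y‖ ≤ sm * b := by
    refine le_trans (norm_devMat_le Y) ?_
    rw [hsumY, Real.sqrt_mul hm1.le]
  have hGX : ‖devMat (g ∘ X)‖ ≤ sm * (Lr * a) := by
    refine le_trans (norm_devMat_le (g ∘ X)) ?_
    have h1 : ∑ i, ‖(g ∘ X) i - ensMean (g ∘ X)‖ ^ 2 ≤ Lr ^ 2 * (m1 * trP X) := by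
      calc ∑ i, ‖(g ∘ X) i - ensMean (g ∘ X)‖ ^ 2
          ≤ ∑ i, ‖(g ∘ X) i - g (ensMean X)‖ ^ 2 := sum_dev_le hMne (g ∘ X) (g (ensMean X))
        _ ≤ ∑ i, (Lr * ‖X i - ensMean X‖) ^ 2 := by
            refine Finset.sum_le_sum fun i _ => ?_
            exact pow_le_pow_left₀ (norm_nonneg _) (hlip (X i) (ensMean X)) 2
        _ = Lr ^ 2 * ∑ i, ‖X i - ensMean X‖ ^ 2 := by
            rw [Finset.mul_sum]; exact Finset.sum_congr rfl fun i _ => by ring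
        _ = Lr ^ 2 * (m1 * trP X) := by rw [hsumX]
    calc Real.sqrt (∑ i, ‖(g ∘ X) i - ensMean (g ∘ X)‖ ^ 2)
        ≤ Real.sqrt (Lr ^ 2 * (m1 * trP X)) := Real.sqrt_le_sqrt h1
      _ = sm * (Lr * a) := by
          rw [Real.sqrt_mul (sq_nonneg Lr), Real.sqrt_sq hL0, Real.sqrt_mul hm1.le]
          ring
  have hGY : ‖devMat (g ∘ Y)‖ ≤ sm * (Lr * b) := by
    refine le_trans (norm_devMat_le (g ∘ Y)) ?_
    have h1 : ∑ i, ‖(g ∘ Y) i - ensMean (g ∘ Y)‖ ^ 2 ≤ Lr ^ 2 * (m1 * trP Y) := by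
      calc ∑ i, ‖(g ∘ Y) i - ensMean (g ∘ Y)‖ ^ 2
          ≤ ∑ i, ‖(g ∘ Y) i - g (ensMean Y)‖ ^ 2 := sum_dev_le hMne (g ∘ Y) (g (ensMean Y))
        _ ≤ ∑ i, (Lr * ‖Y i - ensMean Y‖) ^ 2 := by
            refine Finset.sum_le_sum fun i _ => ?_
            exact pow_le_pow_left₀ (norm_nonneg _) (hlip (Y i) (ensMean Y)) 2
        _ = Lr ^ 2 * ∑ i, ‖Y i - ensMean Y‖ ^ 2 := by
            rw [Finset.mul_sum]; exact Finset.sum_congr rfl fun i _ => by ring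
        _ = Lr ^ 2 * (m1 * trP Y) := by rw [hsumY]
    calc Real.sqrt (∑ i, ‖(g ∘ Y) i - ensMean (g ∘ Y)‖ ^ 2)
        ≤ Real.sqrt (Lr ^ 2 * (m1 * trP Y)) := Real.sqrt_le_sqrt h1
      _ = sm * (Lr * b) := by
          rw [Real.sqrt_mul (sq_nonneg Lr), Real.sqrt_sq hL0, Real.sqrt_mul hm1.le]
          ring
  have hdE : ‖devMat X - devMat Y‖ ≤ sm * e := by
    rw [devMat_sub]
    refine le_trans (norm_devMat_le _) ?_
    have h1 : ∑ i, ‖(X i - Y i) - ensMean (fun i => X i - Y i)‖ ^ 2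
        ≤ m1 * (m1⁻¹ * ∑ i, ‖X i - Y i‖ ^ 2) := by
      calc ∑ i, ‖(X i - Y i) - ensMean (fun i => X i - Y i)‖ ^ 2
          ≤ ∑ i, ‖(X i - Y i) - 0‖ ^ 2 := sum_dev_le hMne (fun i => X i - Y i) 0
        _ = ∑ i, ‖X i - Y i‖ ^ 2 := by simp
        _ = m1 * (m1⁻¹ * ∑ i, ‖X i - Y i‖ ^ 2) := hsumE
    calc Real.sqrt (∑ i, ‖(X i - Y i) - ensMean (fun i => X i - Y i)‖ ^ 2)
        ≤ Real.sqrt (m1 * (m1⁻¹ * ∑ i, ‖X i - Y i‖ ^ 2)) := Real.sqrt_le_sqrt h1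
      _ = sm * e := by rw [Real.sqrt_mul hm1.le]
  have hdG : ‖devMat (g ∘ X) - devMat (g ∘ Y)‖ ≤ sm * (Lr * e) := by
    rw [devMat_sub]
    refine le_trans (norm_devMat_le _) ?_
    have h1 : ∑ i, ‖((g ∘ X) i - (g ∘ Y) i) - ensMean (fun i => (g ∘ X) i - (g ∘ Y) i)‖ ^ 2
        ≤ Lr ^ 2 * (m1 * (m1⁻¹ * ∑ i, ‖X i - Y i‖ ^ 2)) := by
      calc ∑ i, ‖((g ∘ X) i - (g ∘ Y) i) - ensMean (fun i => (g ∘ X) i - (g ∘ Y) i)‖ ^ 2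
          ≤ ∑ i, ‖((g ∘ X) i - (g ∘ Y) i) - 0‖ ^ 2 :=
            sum_dev_le hMne (fun i => (g ∘ X) i - (g ∘ Y) i) 0
        _ = ∑ i, ‖g (X i) - g (Y i)‖ ^ 2 := by simp [Function.comp]
        _ ≤ ∑ i, (Lr * ‖X i - Y i‖) ^ 2 := by
            refine Finset.sum_le_sum fun i _ => ?_
            exact pow_le_pow_left₀ (norm_nonneg _) (hlip (X i) (Y i)) 2
        _ = Lr ^ 2 * ∑ i, ‖X i - Y i‖ ^ 2 := by
            rw [Finset.mul_sum]; exact Finset.sum_congr rfl fun i _ => by ring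
        _ = Lr ^ 2 * (m1 * (m1⁻¹ * ∑ i, ‖X i - Y i‖ ^ 2)) := by rw [← hsumE]
    calc Real.sqrt (∑ i, ‖((g ∘ X) i - (g ∘ Y) i) - ensMean (fun i => (g ∘ X) i - (g ∘ Y) i)‖ ^ 2)
        ≤ Real.sqrt (Lr ^ 2 * (m1 * (m1⁻¹ * ∑ i, ‖X i - Y i‖ ^ 2))) := Real.sqrt_le_sqrt h1
      _ = sm * (Lr * e) := by
          rw [Real.sqrt_mul (sq_nonneg Lr), Real.sqrt_sq hL0, Real.sqrt_mul hm1.le]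
          ring
  -- the matrix B
  set EX := devMat X with hEXdef
  set EY := devMat Y with hEYdef
  set GX := devMat (g ∘ X) with hGXdef
  set GY := devMat (g ∘ Y) with hGYdef
  set B := C + (h / m1) • (GX * GXᵀ) with hBdef
  have hGGT : (GX * GXᵀ).PosSemidef := by
    rw [← Matrix.conjTranspose_eq_transpose_of_trivial]
    exact Matrix.posSemidef_self_mul_conjTranspose GX
  have hSpsd : ((h / m1) • (GX * GXᵀ)).PosSemidef := psd_smul hGGT (div_nonneg hh hm1.le)
  have hB : B.PosDef := hC.add_posSemidef hSpsd
  have hBinv : ‖B⁻¹‖ ≤ c := by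
    rw [hcdef]
    refine inv_norm_le hC hB fun w => ?_
    rw [hBdef]
    simp only [Matrix.add_mulVec, dotProduct_add]
    exact le_add_of_nonneg_right (psd_nonneg hSpsd w)
  -- matrix identities
  have hCdet : IsUnit C.det := hC.det_pos.ne'.isUnit
  have hCu' : C⁻¹ * C = 1 := Matrix.nonsing_inv_mul _ hCdet
  have hBu : B * B⁻¹ = 1 := Matrix.mul_nonsing_inv _ hB.det_pos.ne'.isUnit
  have hid : B⁻¹ - C⁻¹ = -((h / m1) • (C⁻¹ * (GX * GXᵀ) * B⁻¹)) := by
    have h1 : C⁻¹ * B * B⁻¹ = C⁻¹ := by rw [Matrix.mul_assoc, hBu, Matrix.mul_one]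
    have h2 : C⁻¹ * B = 1 + (h / m1) • (C⁻¹ * (GX * GXᵀ)) := by
      rw [hBdef, Matrix.mul_add, hCu', Matrix.mul_smul]
    have h3 : B⁻¹ + (h / m1) • (C⁻¹ * (GX * GXᵀ) * B⁻¹) = C⁻¹ := by
      conv_rhs => rw [← h1, h2, Matrix.add_mul, Matrix.one_mul, Matrix.smul_mul]
    have h4 := sub_add_cancel_left B⁻¹ ((h / m1) • (C⁻¹ * (GX * GXᵀ) * B⁻¹))
    rw [h3] at h4
    exact h4
  -- decomposition of the difference
  have hdecomp : (m1⁻¹ • (EX * GXᵀ)) * B⁻¹ - m1⁻¹ • (EY * GYᵀ * C⁻¹)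
      = m1⁻¹ • (EX * GXᵀ * (B⁻¹ - C⁻¹)) + m1⁻¹ • ((EX * GXᵀ - EY * GYᵀ) * C⁻¹) := by
    rw [Matrix.smul_mul]
    rw [Matrix.mul_sub, Matrix.sub_mul, smul_sub, smul_sub]
    exact (sub_add_sub_cancel _ _ _).symm
  rw [hdecomp]
  -- transpose norms
  have htGX : ‖GXᵀ‖ = ‖GX‖ := by
    rw [← Matrix.conjTranspose_eq_transpose_of_trivial, Matrix.l2_opNorm_conjTranspose]
  have htGY : ‖GYᵀ‖ = ‖GY‖ := by
    rw [← Matrix.conjTranspose_eq_transpose_of_trivial, Matrix.l2_opNorm_conjTranspose]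
  -- term 1 bound
  have hP : ‖EX * GXᵀ‖ ≤ (sm * a) * (sm * (Lr * a)) := by
    calc ‖EX * GXᵀ‖ ≤ ‖EX‖ * ‖GXᵀ‖ := Matrix.l2_opNorm_mul _ _
      _ = ‖EX‖ * ‖GX‖ := by rw [htGX]
      _ ≤ (sm * a) * (sm * (Lr * a)) :=
          mul_le_mul hEX hGX (norm_nonneg _) (by positivity)
  have hGGTle : ‖GX * GXᵀ‖ ≤ (sm * (Lr * a)) * (sm * (Lr * a)) := by
    calc ‖GX * GXᵀ‖ ≤ ‖GX‖ * ‖GXᵀ‖ := Matrix.l2_opNorm_mul _ _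
      _ = ‖GX‖ * ‖GX‖ := by rw [htGX]
      _ ≤ (sm * (Lr * a)) * (sm * (Lr * a)) :=
          mul_le_mul hGX hGX (norm_nonneg _) (by positivity)
  have hinvdiff : ‖B⁻¹ - C⁻¹‖ ≤ (h / m1) * (c * ((sm * (Lr * a)) * (sm * (Lr * a))) * c) := by
    rw [hid, norm_neg, norm_smul, Real.norm_eq_abs, abs_of_nonneg (div_nonneg hh hm1.le)]
    refine mul_le_mul_of_nonneg_left ?_ (div_nonneg hh hm1.le)
    calc ‖C⁻¹ * (GX * GXᵀ) * B⁻¹‖ ≤ ‖C⁻¹ * (GX * GXᵀ)‖ * ‖B⁻¹‖ := Matrix.l2_opNorm_mul _ _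
      _ ≤ (‖C⁻¹‖ * ‖GX * GXᵀ‖) * ‖B⁻¹‖ :=
          mul_le_mul_of_nonneg_right (Matrix.l2_opNorm_mul _ _) (norm_nonneg _)
      _ ≤ (c * ((sm * (Lr * a)) * (sm * (Lr * a)))) * c := by
          refine mul_le_mul ?_ hBinv (norm_nonneg _) (by positivity)
          exact mul_le_mul_of_nonneg_left hGGTle (norm_nonneg _)
  have ht1 : ‖m1⁻¹ • (EX * GXᵀ * (B⁻¹ - C⁻¹))‖
      ≤ m1⁻¹ * (((sm * a) * (sm * (Lr * a))) *
        ((h / m1) * (c * ((sm * (Lr * a)) * (sm * (Lr * a))) * c))) := by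
    rw [norm_smul, Real.norm_eq_abs, abs_of_nonneg (inv_nonneg.mpr hm1.le)]
    refine mul_le_mul_of_nonneg_left ?_ (inv_nonneg.mpr hm1.le)
    calc ‖EX * GXᵀ * (B⁻¹ - C⁻¹)‖ ≤ ‖EX * GXᵀ‖ * ‖B⁻¹ - C⁻¹‖ := Matrix.l2_opNorm_mul _ _
      _ ≤ _ := mul_le_mul hP hinvdiff (norm_nonneg _) (by positivity)
  -- term 2 bound
  have hsplit : EX * GXᵀ - EY * GYᵀ = EX * (GXᵀ - GYᵀ) + (EX - EY) * GYᵀ := by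
    rw [Matrix.mul_sub, Matrix.sub_mul]
    abel
  have hdiffP : ‖EX * GXᵀ - EY * GYᵀ‖
      ≤ (sm * a) * (sm * (Lr * e)) + (sm * e) * (sm * (Lr * b)) := by
    rw [hsplit]
    refine le_trans (norm_add_le _ _) (add_le_add ?_ ?_)
    · calc ‖EX * (GXᵀ - GYᵀ)‖ ≤ ‖EX‖ * ‖GXᵀ - GYᵀ‖ := Matrix.l2_opNorm_mul _ _
        _ ≤ (sm * a) * (sm * (Lr * e)) := by
            refine mul_le_mul hEX ?_ (norm_nonneg _) (by positivity)
            have : GXᵀ - GYᵀ = (GX - GY)ᵀ := (Matrix.transpose_sub _ _).symm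
            rw [this, ← Matrix.conjTranspose_eq_transpose_of_trivial,
              Matrix.l2_opNorm_conjTranspose]
            exact hdG
    · calc ‖(EX - EY) * GYᵀ‖ ≤ ‖EX - EY‖ * ‖GYᵀ‖ := Matrix.l2_opNorm_mul _ _
        _ ≤ (sm * e) * (sm * (Lr * b)) := by
            rw [htGY]
            exact mul_le_mul hdE hGY (norm_nonneg _) (by positivity)
  have ht2 : ‖m1⁻¹ • ((EX * GXᵀ - EY * GYᵀ) * C⁻¹)‖
      ≤ m1⁻¹ * (((sm * a) * (sm * (Lr * e)) + (sm * e) * (sm * (Lr * b))) * c) := by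
    rw [norm_smul, Real.norm_eq_abs, abs_of_nonneg (inv_nonneg.mpr hm1.le)]
    refine mul_le_mul_of_nonneg_left ?_ (inv_nonneg.mpr hm1.le)
    calc ‖(EX * GXᵀ - EY * GYᵀ) * C⁻¹‖ ≤ ‖EX * GXᵀ - EY * GYᵀ‖ * ‖C⁻¹‖ :=
        Matrix.l2_opNorm_mul _ _
      _ ≤ _ := mul_le_mul_of_nonneg_right hdiffP hc0
  -- put everything together
  have htotal := le_trans (norm_add_le _ _) (add_le_add ht1 ht2)
  refine le_trans htotal ?_
  have hE1 : m1⁻¹ * (((sm * a) * (sm * (Lr * a))) *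
      ((h / m1) * (c * ((sm * (Lr * a)) * (sm * (Lr * a))) * c)))
      = h * (Lr ^ 3 * c ^ 2) * (a ^ 2) ^ 2 := by
    rw [hm1e]
    field_simp
  have hE2 : m1⁻¹ * (((sm * a) * (sm * (Lr * e)) + (sm * e) * (sm * (Lr * b))) * c)
      = Lr * c * ((a + b) * e) := by
    rw [hm1e]
    field_simp
  rw [hE1, hE2, ha2]
  have hq1 : 0 ≤ h * trP X ^ 2 := mul_nonneg hh (by positivity)
  have hq2 : 0 ≤ (a + b) * e := mul_nonneg (by positivity) he0
  clear_value a b e c Lr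
  have expand : (Lr ^ 3 * c ^ 2 + Lr * c + 1) * (h * trP X ^ 2 + (a + b) * e)
      = h * (Lr ^ 3 * c ^ 2) * trP X ^ 2 + Lr * c * ((a + b) * e)
        + ((Lr * c + 1) * (h * trP X ^ 2) + (Lr ^ 3 * c ^ 2 + 1) * ((a + b) * e)) := by
    ring
  have k1 : 0 ≤ (Lr * c + 1) * (h * trP X ^ 2) := mul_nonneg (by positivity) hq1
  have k2 : 0 ≤ (Lr ^ 3 * c ^ 2 + 1) * ((a + b) * e) := mul_nonneg (by positivity) hq2
  linarith [k1, k2, expand]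
end

section
/- (Lemma 4.1, EAKF/ETKF case.) Let g : ℝ^d → ℝ^p be Lipschitz with constant L and C ∈ ℝ^{p×p} symmetric positive definite. For every M ≥ 2 and any two ensembles X^(1),…,X^(M) and Y^(1),…,Y^(M) in ℝ^d, the half-gains K̂_X := (1/(2(M−1))) E_X 𝒢_Xᵀ C⁻¹ and K_Y := (1/(M−1)) E_Y 𝒢_Yᵀ C⁻¹ satisfy ‖K̂_X − (1/2) K_Y‖ ≤ L ‖C⁻¹‖ (tr(P_X)^{1/2} + tr(P_Y)^{1/2}) · ((1/(M−1)) Σ_{i=1}^M ‖X^(i) − Y^(i)‖²)^{1/2}. -/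
open Matrix MeasureTheory
open scoped Matrix.Norms.L2Operator NNReal RealInnerProductSpace

lemma pilp_sum_apply' {d M : ℕ} (w : Fin M → EuclideanSpace ℝ (Fin d)) (j : Fin d) :
    (∑ i, w i) j = ∑ i, w i j := by
  rw [WithLp.ofLp_sum]; exact Finset.sum_apply j Finset.univ _

/-- Frobenius-type bound for a product of a column matrix and a transposed column matrix. -/
lemma colmul_norm_le' {d p M : ℕ} (u : Fin M → EuclideanSpace ℝ (Fin d))
    (v : Fin M → EuclideanSpace ℝ (Fin p)) :
    ‖(Matrix.of fun j i => u i j) * (Matrix.of fun k i => v i k)ᵀ‖ ≤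
      Real.sqrt (∑ i, ‖u i‖ ^ 2) * Real.sqrt (∑ i, ‖v i‖ ^ 2) := by
  rw [Matrix.l2_opNorm_def]
  refine ContinuousLinearMap.opNorm_le_bound _ (by positivity) fun x => ?_
  show ‖(WithLp.equiv 2 (Fin d → ℝ)).symm
      ((((Matrix.of fun j i => u i j) * (Matrix.of fun k i => v i k)ᵀ)).mulVec
        (WithLp.equiv 2 (Fin p → ℝ) x))‖ ≤ _
  have hrw : (WithLp.equiv 2 (Fin d → ℝ)).symm
      ((((Matrix.of fun j i => u i j) * (Matrix.of fun k i => v i k)ᵀ)).mulVec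
        (WithLp.equiv 2 (Fin p → ℝ) x)) = ∑ i, ⟪v i, x⟫ • u i := by
    ext j
    rw [pilp_sum_apply']
    simp only [WithLp.equiv_symm_apply, PiLp.toLp_apply, WithLp.equiv_apply, Matrix.mulVec, Matrix.mul_apply, dotProduct,
      Matrix.transpose_apply, Matrix.of_apply, PiLp.smul_apply, smul_eq_mul, PiLp.inner_apply,
      RCLike.inner_apply, conj_trivial]
    simp_rw [Finset.sum_mul]
    rw [Finset.sum_comm]
    refine Finset.sum_congr rfl fun i _ => Finset.sum_congr rfl fun k _ => ?_
    show u i j * v i k * x k = x k * v i k * u i j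
    ring
  rw [hrw]
  calc ‖∑ i, ⟪v i, x⟫ • u i‖ ≤ ∑ i, ‖⟪v i, x⟫ • u i‖ := norm_sum_le _ _
    _ = ∑ i, (‖u i‖ * |⟪v i, x⟫|) := by
        refine Finset.sum_congr rfl fun i _ => ?_
        rw [norm_smul, Real.norm_eq_abs, mul_comm]
    _ ≤ Real.sqrt (∑ i, ‖u i‖ ^ 2) * Real.sqrt (∑ i, |⟪v i, x⟫| ^ 2) :=
        Real.sum_mul_le_sqrt_mul_sqrt _ _ _
    _ ≤ Real.sqrt (∑ i, ‖u i‖ ^ 2) * Real.sqrt (∑ i, (‖v i‖ * ‖x‖) ^ 2) := by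
        have h1 : ∀ i : Fin M, |⟪v i, x⟫| ^ 2 ≤ (‖v i‖ * ‖x‖) ^ 2 := fun i => by
          have := abs_real_inner_le_norm (v i) x
          nlinarith [abs_nonneg ⟪v i, x⟫]
        exact mul_le_mul_of_nonneg_left
          (Real.sqrt_le_sqrt (Finset.sum_le_sum fun i _ => h1 i)) (Real.sqrt_nonneg _)
    _ ≤ Real.sqrt (∑ i, ‖u i‖ ^ 2) * (Real.sqrt (∑ i, ‖v i‖ ^ 2) * ‖x‖) := by
        rw [show (∑ i, (‖v i‖ * ‖x‖) ^ 2) = (∑ i, ‖v i‖ ^ 2) * ‖x‖ ^ 2 by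
          rw [Finset.sum_mul]; exact Finset.sum_congr rfl fun i _ => by ring,
          Real.sqrt_mul (by positivity), Real.sqrt_sq (norm_nonneg _)]
    _ = Real.sqrt (∑ i, ‖u i‖ ^ 2) * Real.sqrt (∑ i, ‖v i‖ ^ 2) * ‖x‖ := by ring

lemma ensMean_sub' {d M : ℕ} (a b : Fin M → EuclideanSpace ℝ (Fin d)) :
    ensMean (fun i => a i - b i) = ensMean a - ensMean b := by
  simp [ensMean, Finset.sum_sub_distrib, smul_sub]

lemma sum_dev_eq_zero' {d M : ℕ} (hM : (M : ℝ) ≠ 0) (w : Fin M → EuclideanSpace ℝ (Fin d)) :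
    ∑ i, (w i - ensMean w) = 0 := by
  rw [Finset.sum_sub_distrib, Finset.sum_const, Finset.card_univ, Fintype.card_fin, ensMean,
    ← Nat.cast_smul_eq_nsmul ℝ, smul_smul, mul_inv_cancel₀ hM, one_smul, sub_self]

lemma sum_sq_dev_le' {d M : ℕ} (hM : (M : ℝ) ≠ 0) (w : Fin M → EuclideanSpace ℝ (Fin d))
    (c : EuclideanSpace ℝ (Fin d)) :
    ∑ i, ‖w i - ensMean w‖ ^ 2 ≤ ∑ i, ‖w i - c‖ ^ 2 := by
  have key : ∑ i, ‖w i - c‖ ^ 2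
      = ∑ i, ‖w i - ensMean w‖ ^ 2 + 2 * ⟪∑ i, (w i - ensMean w), ensMean w - c⟫
        + (M : ℝ) * ‖ensMean w - c‖ ^ 2 := by
    have h1 : ∀ i : Fin M, ‖w i - c‖ ^ 2 = ‖w i - ensMean w‖ ^ 2
        + 2 * ⟪w i - ensMean w, ensMean w - c⟫ + ‖ensMean w - c‖ ^ 2 := fun i => by
      rw [← sub_add_sub_cancel (w i) (ensMean w) c, norm_add_sq_real]
    rw [Finset.sum_congr rfl fun i _ => h1 i, Finset.sum_add_distrib, Finset.sum_add_distrib,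
      Finset.sum_const, Finset.card_univ, Fintype.card_fin,
      ← Finset.mul_sum, ← sum_inner, nsmul_eq_mul]
  rw [key, sum_dev_eq_zero' hM w]
  simp only [inner_zero_left, mul_zero, add_zero]
  nlinarith [sq_nonneg ‖ensMean w - c‖, Nat.cast_nonneg (α := ℝ) M]

/-- Lemma 4.1, EAKF/ETKF case:
`‖K̂_X − (1/2) K_Y‖ ≤ L ‖C⁻¹‖ (tr(P_X)^{1/2} + tr(P_Y)^{1/2})
((1/(M−1)) ∑ᵢ ‖X⁽ⁱ⁾ − Y⁽ⁱ⁾‖²)^{1/2}`. -/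
theorem half_gain_difference_bound {d p M : ℕ} (hM : 2 ≤ M) (L : ℝ≥0)
    (g : EuclideanSpace ℝ (Fin d) → EuclideanSpace ℝ (Fin p)) (hg : LipschitzWith L g)
    (C : Matrix (Fin p) (Fin p) ℝ) (hC : C.PosDef)
    (X Y : Fin M → EuclideanSpace ℝ (Fin d)) :
    ‖(2 * ((M : ℝ) - 1))⁻¹ • (devMat X * (devMat (g ∘ X))ᵀ * C⁻¹) -
        (2 : ℝ)⁻¹ • (((M : ℝ) - 1)⁻¹ • (devMat Y * (devMat (g ∘ Y))ᵀ * C⁻¹))‖ ≤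
      (L : ℝ) * ‖C⁻¹‖ * (Real.sqrt (trP X) + Real.sqrt (trP Y)) *
        Real.sqrt (((M : ℝ) - 1)⁻¹ * ∑ i, ‖X i - Y i‖ ^ 2) := by
  have hM2 : (2 : ℝ) ≤ (M : ℝ) := by exact_mod_cast hM
  have hm1 : (0 : ℝ) < (M : ℝ) - 1 := by linarith
  have hMne : (M : ℝ) ≠ 0 := by linarith
  set m1 : ℝ := (M : ℝ) - 1 with hm1def
  -- Lipschitz norm bound
  have hgn : ∀ x y : EuclideanSpace ℝ (Fin d), ‖g x - g y‖ ≤ (L : ℝ) * ‖x - y‖ := fun x y => by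
    have := hg.dist_le_mul x y
    rwa [dist_eq_norm, dist_eq_norm] at this
  -- column difference functions
  set w : Fin M → EuclideanSpace ℝ (Fin p) := fun i => g (X i) - g (Y i) with hw
  set wd : Fin M → EuclideanSpace ℝ (Fin d) := fun i => X i - Y i with hwd
  -- matrix identities
  have hGsub : devMat (g ∘ X) - devMat (g ∘ Y)
      = Matrix.of fun k i => (w i - ensMean w) k := by
    ext k i
    have hmean : ensMean w = ensMean (fun i => g (X i)) - ensMean (fun i => g (Y i)) :=
      ensMean_sub' _ _
    simp only [Matrix.sub_apply, devMat, Matrix.of_apply, Function.comp_def, PiLp.sub_apply,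
      hw, hmean, ensMean_sub']
    ring
  have hEsub : devMat X - devMat Y = Matrix.of fun j i => (wd i - ensMean wd) j := by
    ext j i
    have hmean : ensMean wd = ensMean X - ensMean Y := ensMean_sub' _ _
    simp only [Matrix.sub_apply, devMat, Matrix.of_apply, PiLp.sub_apply, hwd, hmean, ensMean_sub']
    ring
  -- rewrite the difference of half-gains
  have hsmul : (2 * m1)⁻¹ • (devMat X * (devMat (g ∘ X))ᵀ * C⁻¹) -
      (2 : ℝ)⁻¹ • (m1⁻¹ • (devMat Y * (devMat (g ∘ Y))ᵀ * C⁻¹))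
      = (2 * m1)⁻¹ • ((devMat X * (devMat (g ∘ X))ᵀ - devMat Y * (devMat (g ∘ Y))ᵀ) * C⁻¹) := by
    rw [smul_smul, ← mul_inv, Matrix.sub_mul, smul_sub]
  rw [hsmul]
  -- decompose the product difference
  have hdiff1 : devMat X * (devMat (g ∘ X))ᵀ - devMat Y * (devMat (g ∘ Y))ᵀ
      = devMat X * (devMat (g ∘ X) - devMat (g ∘ Y))ᵀ
        + (devMat X - devMat Y) * (devMat (g ∘ Y))ᵀ := by
    rw [Matrix.transpose_sub, Matrix.mul_sub, Matrix.sub_mul]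
    abel
  -- bounds for the two pieces
  have B1 : ‖devMat X * (devMat (g ∘ X) - devMat (g ∘ Y))ᵀ‖ ≤
      Real.sqrt (∑ i, ‖X i - ensMean X‖ ^ 2) * Real.sqrt (∑ i, ‖w i - ensMean w‖ ^ 2) := by
    rw [hGsub]
    exact colmul_norm_le' (fun i => X i - ensMean X) (fun i => w i - ensMean w)
  have B2 : ‖(devMat X - devMat Y) * (devMat (g ∘ Y))ᵀ‖ ≤
      Real.sqrt (∑ i, ‖wd i - ensMean wd‖ ^ 2) *
        Real.sqrt (∑ i, ‖g (Y i) - ensMean (g ∘ Y)‖ ^ 2) := by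
    rw [hEsub]
    exact colmul_norm_le' (fun i => wd i - ensMean wd) (fun i => g (Y i) - ensMean (g ∘ Y))
  -- scalar abbreviations
  set a := Real.sqrt (trP X) with ha
  set b := Real.sqrt (trP Y) with hb
  set D := ∑ i, ‖X i - Y i‖ ^ 2 with hD
  set t := Real.sqrt D with ht
  set s := Real.sqrt m1 with hs
  have hDnn : 0 ≤ D := Finset.sum_nonneg fun i _ => by positivity
  have hs_pos : 0 < s := Real.sqrt_pos.mpr hm1
  have hLnn : (0 : ℝ) ≤ (L : ℝ) := L.coe_nonneg
  have hCnn : (0 : ℝ) ≤ ‖C⁻¹‖ := norm_nonneg _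
  -- scalar bound 1 : √(∑ ‖X i − x̄‖²) = s * a
  have hSX : Real.sqrt (∑ i, ‖X i - ensMean X‖ ^ 2) = s * a := by
    have : (∑ i, ‖X i - ensMean X‖ ^ 2) = m1 * trP X := by
      rw [trP, ← mul_assoc, mul_inv_cancel₀ (ne_of_gt hm1), one_mul]
    rw [this, Real.sqrt_mul hm1.le]
  have hSY : Real.sqrt (∑ i, ‖Y i - ensMean Y‖ ^ 2) = s * b := by
    have : (∑ i, ‖Y i - ensMean Y‖ ^ 2) = m1 * trP Y := by
      rw [trP, ← mul_assoc, mul_inv_cancel₀ (ne_of_gt hm1), one_mul]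
    rw [this, Real.sqrt_mul hm1.le]
  -- scalar bound 2 : √(∑ ‖w i − w̄‖²) ≤ L * t
  have hsumw : ∑ i, ‖w i - ensMean w‖ ^ 2 ≤ (L : ℝ) ^ 2 * D := by
    calc ∑ i, ‖w i - ensMean w‖ ^ 2 ≤ ∑ i, ‖w i - 0‖ ^ 2 := sum_sq_dev_le' hMne w 0
      _ = ∑ i, ‖w i‖ ^ 2 := by simp
      _ ≤ ∑ i, ((L : ℝ) * ‖X i - Y i‖) ^ 2 :=
          Finset.sum_le_sum fun i _ => pow_le_pow_left₀ (norm_nonneg _) (hgn (X i) (Y i)) 2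
      _ = (L : ℝ) ^ 2 * D := by rw [hD, Finset.mul_sum]; ring_nf
  have hW : Real.sqrt (∑ i, ‖w i - ensMean w‖ ^ 2) ≤ (L : ℝ) * t := by
    calc Real.sqrt (∑ i, ‖w i - ensMean w‖ ^ 2) ≤ Real.sqrt ((L : ℝ) ^ 2 * D) :=
        Real.sqrt_le_sqrt hsumw
      _ = (L : ℝ) * t := by
          rw [Real.sqrt_mul (sq_nonneg _), Real.sqrt_sq hLnn]
  -- scalar bound 3 : √(∑ ‖wd i − w̄d‖²) ≤ t
  have hWd : Real.sqrt (∑ i, ‖wd i - ensMean wd‖ ^ 2) ≤ t := by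
    refine Real.sqrt_le_sqrt ?_
    calc ∑ i, ‖wd i - ensMean wd‖ ^ 2 ≤ ∑ i, ‖wd i - 0‖ ^ 2 := sum_sq_dev_le' hMne wd 0
      _ = D := by simp [hwd, hD]
  -- scalar bound 4 : √(∑ ‖g(Yᵢ) − ḡ_Y‖²) ≤ L * (s * b)
  have hGY : Real.sqrt (∑ i, ‖g (Y i) - ensMean (g ∘ Y)‖ ^ 2) ≤ (L : ℝ) * (s * b) := by
    have h1 : ∑ i, ‖g (Y i) - ensMean (g ∘ Y)‖ ^ 2
        ≤ ∑ i, ‖g (Y i) - g (ensMean Y)‖ ^ 2 :=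
      sum_sq_dev_le' hMne (fun i => g (Y i)) (g (ensMean Y))
    have h2 : ∑ i, ‖g (Y i) - g (ensMean Y)‖ ^ 2
        ≤ (L : ℝ) ^ 2 * ∑ i, ‖Y i - ensMean Y‖ ^ 2 := by
      rw [Finset.mul_sum]
      refine Finset.sum_le_sum fun i _ => ?_
      have := pow_le_pow_left₀ (norm_nonneg _) (hgn (Y i) (ensMean Y)) 2
      calc ‖g (Y i) - g (ensMean Y)‖ ^ 2 ≤ ((L : ℝ) * ‖Y i - ensMean Y‖) ^ 2 := this
        _ = (L : ℝ) ^ 2 * ‖Y i - ensMean Y‖ ^ 2 := by ring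
    calc Real.sqrt (∑ i, ‖g (Y i) - ensMean (g ∘ Y)‖ ^ 2)
        ≤ Real.sqrt ((L : ℝ) ^ 2 * ∑ i, ‖Y i - ensMean Y‖ ^ 2) :=
          Real.sqrt_le_sqrt (h1.trans h2)
      _ = (L : ℝ) * (s * b) := by
          rw [Real.sqrt_mul (sq_nonneg _), Real.sqrt_sq hLnn, hSY]
  -- put the matrix bounds together
  have hnorm_smul : ‖(2 * m1)⁻¹ •
      ((devMat X * (devMat (g ∘ X))ᵀ - devMat Y * (devMat (g ∘ Y))ᵀ) * C⁻¹)‖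
      = (2 * m1)⁻¹ * ‖(devMat X * (devMat (g ∘ X))ᵀ - devMat Y * (devMat (g ∘ Y))ᵀ) * C⁻¹‖ := by
    rw [norm_smul, Real.norm_eq_abs, abs_of_pos (by positivity)]
  rw [hnorm_smul]
  have hmain : ‖(devMat X * (devMat (g ∘ X))ᵀ - devMat Y * (devMat (g ∘ Y))ᵀ) * C⁻¹‖
      ≤ ((s * a) * ((L : ℝ) * t) + t * ((L : ℝ) * (s * b))) * ‖C⁻¹‖ := by
    calc ‖(devMat X * (devMat (g ∘ X))ᵀ - devMat Y * (devMat (g ∘ Y))ᵀ) * C⁻¹‖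
        ≤ ‖devMat X * (devMat (g ∘ X))ᵀ - devMat Y * (devMat (g ∘ Y))ᵀ‖ * ‖C⁻¹‖ :=
          Matrix.l2_opNorm_mul _ _
      _ ≤ (‖devMat X * (devMat (g ∘ X) - devMat (g ∘ Y))ᵀ‖
            + ‖(devMat X - devMat Y) * (devMat (g ∘ Y))ᵀ‖) * ‖C⁻¹‖ := by
          refine mul_le_mul_of_nonneg_right ?_ hCnn
          rw [hdiff1]
          exact norm_add_le _ _
      _ ≤ ((s * a) * ((L : ℝ) * t) + t * ((L : ℝ) * (s * b))) * ‖C⁻¹‖ := by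
          refine mul_le_mul_of_nonneg_right ?_ hCnn
          refine add_le_add ?_ ?_
          · calc ‖devMat X * (devMat (g ∘ X) - devMat (g ∘ Y))ᵀ‖
                ≤ Real.sqrt (∑ i, ‖X i - ensMean X‖ ^ 2) *
                    Real.sqrt (∑ i, ‖w i - ensMean w‖ ^ 2) := B1
              _ ≤ (s * a) * ((L : ℝ) * t) := by
                  rw [hSX]
                  exact mul_le_mul_of_nonneg_left hW (by positivity)
          · calc ‖(devMat X - devMat Y) * (devMat (g ∘ Y))ᵀ‖
                ≤ Real.sqrt (∑ i, ‖wd i - ensMean wd‖ ^ 2) *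
                    Real.sqrt (∑ i, ‖g (Y i) - ensMean (g ∘ Y)‖ ^ 2) := B2
              _ ≤ t * ((L : ℝ) * (s * b)) :=
                  mul_le_mul hWd hGY (Real.sqrt_nonneg _) (Real.sqrt_nonneg _)
  -- final arithmetic
  have hsqrtD : Real.sqrt (m1⁻¹ * D) = s⁻¹ * t := by
    rw [Real.sqrt_mul (by positivity), Real.sqrt_inv]
  have hanneg : 0 ≤ a := Real.sqrt_nonneg _
  have hbnneg : 0 ≤ b := Real.sqrt_nonneg _
  have htnneg : 0 ≤ t := Real.sqrt_nonneg _
  have hm1s : m1 = s ^ 2 := (Real.sq_sqrt hm1.le).symm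
  calc (2 * m1)⁻¹ * ‖(devMat X * (devMat (g ∘ X))ᵀ - devMat Y * (devMat (g ∘ Y))ᵀ) * C⁻¹‖
      ≤ (2 * m1)⁻¹ * (((s * a) * ((L : ℝ) * t) + t * ((L : ℝ) * (s * b))) * ‖C⁻¹‖) :=
        mul_le_mul_of_nonneg_left hmain (by positivity)
    _ = 2⁻¹ * ((L : ℝ) * ‖C⁻¹‖ * (a + b) * (s⁻¹ * t)) := by
        rw [hm1s]
        field_simp
    _ ≤ (L : ℝ) * ‖C⁻¹‖ * (a + b) * (s⁻¹ * t) := by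
        have hnn : 0 ≤ (L : ℝ) * ‖C⁻¹‖ * (a + b) * (s⁻¹ * t) := by positivity
        linarith
    _ = (L : ℝ) * ‖C⁻¹‖ * (a + b) * Real.sqrt (m1⁻¹ * D) := by rw [hsqrtD]
end

section
/- (Second-order remainder bound for the ETKF transformation.) Let B ∈ ℝ^{M×M} be symmetric positive semidefinite. Then the spectral norm satisfies ‖ ((Id_M + B)⁻¹)^{1/2} − Id_M + (1/2) B ‖ ≤ (3/8) ‖B‖². -/
open Matrix MeasureTheory
open scoped Matrix.Norms.L2Operator NNReal RealInnerProductSpace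

open scoped MatrixOrder in
lemma etkf_psd_sqrt_eq {n : Type*} [Fintype n] [DecidableEq n] {A S : Matrix n n ℝ}
    (hA : A.PosSemidef) (hS : S.PosSemidef) (h : S ^ 2 = A) : hA.sqrt = S := by
  have e1 : hA.sqrt = cfc Real.sqrt A := by
    rw [hA.1.cfc_eq]
    simp [Matrix.PosSemidef.sqrt, Matrix.IsHermitian.cfc, Unitary.conjStarAlgAut_apply]
  rw [e1, ← cfcₙ_eq_cfc (hf0 := Real.sqrt_zero), ← CFC.sqrt_eq_real_sqrt A hA.nonneg, CFC.sqrt_eq_iff _ _ hA.nonneg hS.nonneg, ← sq, h]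

/-- The key scalar inequality: `|(1+x)^{-1/2} - 1 + x/2| ≤ (3/8) x²` for `x ≥ 0`. -/
lemma etkf_scalar_bound (x : ℝ) (hx : 0 ≤ x) :
    |(Real.sqrt (1 + x))⁻¹ - 1 + x / 2| ≤ 3 / 8 * x ^ 2 := by
  set s := Real.sqrt (1 + x) with hs
  have hs1 : 1 ≤ s := by
    have : Real.sqrt 1 ≤ s := Real.sqrt_le_sqrt (by linarith)
    simpa using this
  have hs0 : 0 < s := by linarith
  have hs2 : s ^ 2 = 1 + x := Real.sq_sqrt (by linarith)
  have hts : s⁻¹ * s = 1 := inv_mul_cancel₀ (ne_of_gt hs0)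
  have ht0 : 0 < s⁻¹ := inv_pos.mpr hs0
  have ht1 : s⁻¹ ≤ 1 := by
    rw [inv_le_one_iff₀]; right; exact hs1
  rw [abs_le]
  constructor
  · nlinarith [sq_nonneg (s - 1), sq_nonneg (s⁻¹ - 1), sq_nonneg x, mul_pos hs0 ht0,
      sq_nonneg (s * x - x)]
  · nlinarith [sq_nonneg (s - 1), sq_nonneg (s⁻¹ - 1), sq_nonneg x, sq_nonneg (s * x - x)]

/-- Spectral norm of a diagonal matrix is at most a uniform bound on the entries. -/
lemma etkf_diag_norm_le {M : ℕ} (w : Fin M → ℝ) (c : ℝ) (hc : 0 ≤ c) (h : ∀ i, |w i| ≤ c) :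
    ‖(Matrix.diagonal w : Matrix (Fin M) (Fin M) ℝ)‖ ≤ c := by
  rw [Matrix.l2_opNorm_def]
  refine ContinuousLinearMap.opNorm_le_bound _ hc fun x => ?_
  have hval : (LinearEquiv.trans Matrix.toEuclideanLin LinearMap.toContinuousLinearMap
      (Matrix.diagonal w)) x
      = (WithLp.equiv 2 (Fin M → ℝ)).symm (Matrix.diagonal w *ᵥ (WithLp.equiv 2 (Fin M → ℝ)) x) :=
    rfl
  rw [hval, EuclideanSpace.norm_eq]
  have hxn : ‖x‖ = Real.sqrt (∑ i, ‖x i‖ ^ 2) := EuclideanSpace.norm_eq x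
  rw [hxn, ← Real.sqrt_sq hc, ← Real.sqrt_mul (by positivity)]
  apply Real.sqrt_le_sqrt
  rw [Finset.mul_sum]
  apply Finset.sum_le_sum
  intro i _
  have : ((WithLp.equiv 2 (Fin M → ℝ)).symm
      (Matrix.diagonal w *ᵥ (WithLp.equiv 2 (Fin M → ℝ)) x)) i
      = w i * x i := by
    simp [Matrix.mulVec_diagonal]
  rw [this]
  have h1 : ‖w i * x i‖ ^ 2 = (w i) ^ 2 * ‖x i‖ ^ 2 := by
    rw [norm_mul, mul_pow]
    congr 1
    rw [Real.norm_eq_abs, sq_abs]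
  rw [h1]
  have h2 : (w i) ^ 2 ≤ c ^ 2 := by
    have := h i
    nlinarith [abs_nonneg (w i), sq_abs (w i)]
  nlinarith [sq_nonneg (‖x i‖)]

/-- second-order remainder bound for the ETKF transformation:
`‖((Id + B)⁻¹)^{1/2} − Id + (1/2)B‖ ≤ (3/8) ‖B‖²` in spectral norm. -/
theorem etkf_transformation_remainder_bound {M : ℕ} (B : Matrix (Fin M) (Fin M) ℝ)
    (hB : B.PosSemidef)
    (h1 : (((1 : Matrix (Fin M) (Fin M) ℝ) + B)⁻¹).PosSemidef) :
    ‖h1.sqrt - 1 + (2 : ℝ)⁻¹ • B‖ ≤ (3 / 8) * ‖B‖ ^ 2 := by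
  have hBH : B.IsHermitian := hB.1
  set U : Matrix (Fin M) (Fin M) ℝ := (hBH.eigenvectorUnitary : Matrix (Fin M) (Fin M) ℝ)
    with hUdef
  set μ : Fin M → ℝ := hBH.eigenvalues with hμdef
  have hμ0 : ∀ i, 0 ≤ μ i := fun i => hB.eigenvalues_nonneg i
  have hstarU : star U * U = 1 := Unitary.coe_star_mul_self hBH.eigenvectorUnitary
  have hUstar : U * star U = 1 := Unitary.coe_mul_star_self hBH.eigenvectorUnitary
  -- norm of U is at most 1
  have hnorm1 : ‖(1 : Matrix (Fin M) (Fin M) ℝ)‖ ≤ 1 := by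
    rw [Matrix.cstar_norm_def, _root_.map_one, ContinuousLinearMap.one_def]
    exact ContinuousLinearMap.norm_id_le
  have hUn : ‖U‖ ≤ 1 := by
    have h2 : ‖Uᴴ * U‖ = ‖U‖ * ‖U‖ := Matrix.l2_opNorm_conjTranspose_mul_self U
    rw [← Matrix.star_eq_conjTranspose, hstarU] at h2
    nlinarith [norm_nonneg U, hnorm1]
  have hUstarn : ‖star U‖ ≤ 1 := by
    rw [Matrix.star_eq_conjTranspose, Matrix.l2_opNorm_conjTranspose]
    exact hUn
  -- conjugation by U does not increase the norm
  have hconj : ∀ D : Matrix (Fin M) (Fin M) ℝ, ‖U * D * star U‖ ≤ ‖D‖ := fun D => by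
    calc ‖U * D * star U‖ ≤ ‖U * D‖ * ‖star U‖ := Matrix.l2_opNorm_mul _ _
      _ ≤ (‖U‖ * ‖D‖) * ‖star U‖ := by
          apply mul_le_mul_of_nonneg_right (Matrix.l2_opNorm_mul _ _) (norm_nonneg _)
      _ ≤ (1 * ‖D‖) * 1 := by
          apply mul_le_mul _ hUstarn (norm_nonneg _) (by positivity)
          exact mul_le_mul_of_nonneg_right hUn (norm_nonneg _)
      _ = ‖D‖ := by ring
  -- multiplication of conjugated diagonals
  have hcancel : ∀ X : Matrix (Fin M) (Fin M) ℝ, star U * (U * X) = X := fun X => by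
    rw [← mul_assoc, hstarU, one_mul]
  have hkey : ∀ D1 D2 : Matrix (Fin M) (Fin M) ℝ,
      (U * D1 * star U) * (U * D2 * star U) = U * (D1 * D2) * star U := fun D1 D2 => by
    simp only [mul_assoc]
    rw [hcancel]
  -- spectral decomposition of B
  have hBspec : B = U * Matrix.diagonal μ * star U := by
    have := hBH.spectral_theorem
    simpa using this
  -- eigenvalue bound : μ i ≤ ‖B‖
  have heig : ∀ i, μ i ≤ ‖B‖ := fun i => by
    have hv : B *ᵥ ⇑(hBH.eigenvectorBasis i) = μ i • ⇑(hBH.eigenvectorBasis i) :=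
      hBH.mulVec_eigenvectorBasis i
    have hv' : Matrix.toEuclideanCLM (𝕜 := ℝ) (n := Fin M) B (hBH.eigenvectorBasis i)
        = μ i • hBH.eigenvectorBasis i := by
      apply (WithLp.equiv 2 (Fin M → ℝ)).injective
      simpa [Matrix.ofLp_toEuclideanCLM, Matrix.toLin'_apply] using hv
    have hle := (Matrix.toEuclideanCLM (𝕜 := ℝ) (n := Fin M) B).le_opNorm
      (hBH.eigenvectorBasis i)
    have hvnorm : ‖hBH.eigenvectorBasis i‖ = 1 := hBH.eigenvectorBasis.orthonormal.1 i
    rw [hv', norm_smul, hvnorm, mul_one, Real.norm_eq_abs, ← Matrix.cstar_norm_def,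
      mul_one] at hle
    exact le_trans (le_abs_self _) hle
  -- the square root of (1+B)⁻¹
  set w : Fin M → ℝ := fun i => (Real.sqrt (1 + μ i))⁻¹ with hwdef
  have hw0 : ∀ i, 0 ≤ w i := fun i => inv_nonneg.mpr (Real.sqrt_nonneg _)
  set S : Matrix (Fin M) (Fin M) ℝ := U * Matrix.diagonal w * star U with hSdef
  have hSpsd : S.PosSemidef := by
    rw [hSdef, Matrix.star_eq_conjTranspose]
    exact (Matrix.posSemidef_diagonal_iff.mpr hw0).mul_mul_conjTranspose_same U
  have hsqmul : ∀ i, w i * w i * (1 + μ i) = 1 := fun i => by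
    have h1x : (0:ℝ) < 1 + μ i := by linarith [hμ0 i]
    have hss : Real.sqrt (1 + μ i) * Real.sqrt (1 + μ i) = 1 + μ i :=
      Real.mul_self_sqrt (le_of_lt h1x)
    show (Real.sqrt (1 + μ i))⁻¹ * (Real.sqrt (1 + μ i))⁻¹ * (1 + μ i) = 1
    rw [← mul_inv, hss]
    exact inv_mul_cancel₀ (ne_of_gt h1x)
  have hSsq : S ^ 2 = ((1 : Matrix (Fin M) (Fin M) ℝ) + B)⁻¹ := by
    have hd : Matrix.diagonal (fun i => 1 + μ i)
        = (1 : Matrix (Fin M) (Fin M) ℝ) + Matrix.diagonal μ := by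
      rw [← Matrix.diagonal_one, Matrix.diagonal_add]
    have honeB : (1 : Matrix (Fin M) (Fin M) ℝ) + B
        = U * Matrix.diagonal (fun i => 1 + μ i) * star U := by
      rw [hd, mul_add, mul_one, add_mul, hUstar, ← hBspec]
    have hSS : S ^ 2 * ((1 : Matrix (Fin M) (Fin M) ℝ) + B) = 1 := by
      rw [pow_two, hSdef, hkey, honeB, hkey, Matrix.diagonal_mul_diagonal,
        Matrix.diagonal_mul_diagonal]
      have : (fun i => w i * w i * (1 + μ i)) = fun _ => (1:ℝ) := funext hsqmul
      rw [this, Matrix.diagonal_one, Matrix.mul_one, hUstar]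
    exact (Matrix.inv_eq_left_inv hSS).symm
  have hsqrt : h1.sqrt = S := etkf_psd_sqrt_eq h1 hSpsd hSsq
  -- rewrite the remainder as a conjugated diagonal
  set g : Fin M → ℝ := fun i => w i - 1 + μ i / 2 with hgdef
  have factor : ∀ (D1 D2 D3 : Matrix (Fin M) (Fin M) ℝ) (c : ℝ),
      U * D1 * star U - U * D2 * star U + c • (U * D3 * star U)
        = U * (D1 - D2 + c • D3) * star U := by
    intro D1 D2 D3 c
    simp only [mul_sub, sub_mul, mul_add, add_mul, smul_mul_assoc, mul_smul_comm]
  have hdiagg : Matrix.diagonal w - 1 + (2 : ℝ)⁻¹ • Matrix.diagonal μ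
      = Matrix.diagonal g := by
    rw [← Matrix.diagonal_one, ← Matrix.diagonal_smul, Matrix.diagonal_sub,
      Matrix.diagonal_add]
    have hf : (fun i => w i - 1 + ((2:ℝ)⁻¹ • μ) i) = g := by
      funext i
      simp only [hgdef, Pi.smul_apply, smul_eq_mul]
      ring
    rw [hf]
  have hrem : h1.sqrt - 1 + (2 : ℝ)⁻¹ • B = U * Matrix.diagonal g * star U := by
    have h1eq : (1 : Matrix (Fin M) (Fin M) ℝ) = U * 1 * star U := by
      rw [mul_one, hUstar]
    conv_lhs => rw [hsqrt, hSdef, hBspec, h1eq]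
    rw [factor, hdiagg]
  -- final bound
  rw [hrem]
  have hBnn : 0 ≤ ‖B‖ := norm_nonneg B
  refine le_trans (hconj _) (etkf_diag_norm_le g _ (by positivity) fun i => ?_)
  have h1i := etkf_scalar_bound (μ i) (hμ0 i)
  have h2i : μ i ^ 2 ≤ ‖B‖ ^ 2 := by nlinarith [hμ0 i, heig i]
  calc |g i| ≤ 3 / 8 * μ i ^ 2 := h1i
    _ ≤ 3 / 8 * ‖B‖ ^ 2 := by linarith
end

section
/- (Trace identity for the EnKF analysis step.) Let X^(1),…,X^(M) ∈ ℝ^d with M ≥ 2, g : ℝ^d → ℝ^p any map, C ∈ ℝ^{p×p} symmetric positive definite and h ≥ 0. With E := [X^(i) − x̄]_{i=1}^M, 𝒢 := [g(X^(i)) − ḡ]_{i=1}^M and the EnKF gain K := (1/(M−1)) E 𝒢ᵀ (C + (h/(M−1)) 𝒢𝒢ᵀ)⁻¹, one has the identity (1/(M−1)) tr(K 𝒢 Eᵀ) = tr(K C Kᵀ) + (h/(M−1)) tr(K 𝒢 𝒢ᵀ Kᵀ). -/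
open Matrix MeasureTheory
open scoped Matrix.Norms.L2Operator NNReal RealInnerProductSpace

/-- trace identity for the EnKF analysis step: with the EnKF gain
`K = (1/(M−1)) E 𝒢ᵀ (C + (h/(M−1)) 𝒢𝒢ᵀ)⁻¹`,
`(1/(M−1)) tr(K 𝒢 Eᵀ) = tr(K C Kᵀ) + (h/(M−1)) tr(K 𝒢 𝒢ᵀ Kᵀ)`. -/
theorem enkf_analysis_trace_identity {d p M : ℕ} (hM : 2 ≤ M)
    (X : Fin M → EuclideanSpace ℝ (Fin d))
    (g : EuclideanSpace ℝ (Fin d) → EuclideanSpace ℝ (Fin p))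
    (C : Matrix (Fin p) (Fin p) ℝ) (hC : C.PosDef) (h : ℝ) (hh : 0 ≤ h) :
    (((M : ℝ) - 1)⁻¹) *
        Matrix.trace ((((M : ℝ) - 1)⁻¹ • (devMat X * (devMat (g ∘ X))ᵀ *
            (C + (h / ((M : ℝ) - 1)) • (devMat (g ∘ X) * (devMat (g ∘ X))ᵀ))⁻¹)) *
          devMat (g ∘ X) * (devMat X)ᵀ) =
      Matrix.trace ((((M : ℝ) - 1)⁻¹ • (devMat X * (devMat (g ∘ X))ᵀ *
            (C + (h / ((M : ℝ) - 1)) • (devMat (g ∘ X) * (devMat (g ∘ X))ᵀ))⁻¹)) * C *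
          (((M : ℝ) - 1)⁻¹ • (devMat X * (devMat (g ∘ X))ᵀ *
            (C + (h / ((M : ℝ) - 1)) • (devMat (g ∘ X) * (devMat (g ∘ X))ᵀ))⁻¹))ᵀ) +
      (h / ((M : ℝ) - 1)) *
        Matrix.trace ((((M : ℝ) - 1)⁻¹ • (devMat X * (devMat (g ∘ X))ᵀ *
            (C + (h / ((M : ℝ) - 1)) • (devMat (g ∘ X) * (devMat (g ∘ X))ᵀ))⁻¹)) *
          devMat (g ∘ X) * (devMat (g ∘ X))ᵀ *
          (((M : ℝ) - 1)⁻¹ • (devMat X * (devMat (g ∘ X))ᵀ *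
            (C + (h / ((M : ℝ) - 1)) • (devMat (g ∘ X) * (devMat (g ∘ X))ᵀ))⁻¹))ᵀ) := by

  set E := devMat X with hE
  set G := devMat (g ∘ X) with hG
  set c := h / ((M : ℝ) - 1) with hc_def
  set S := C + c • (G * Gᵀ) with hSdef
  have hM1 : (1:ℝ) ≤ (M : ℝ) - 1 := by
    have : (2:ℝ) ≤ (M:ℝ) := by exact_mod_cast hM
    linarith
  have hc : 0 ≤ c := div_nonneg hh (by linarith)
  have hsplit : c • (G * Gᵀ) = (Real.sqrt c • G) * (Real.sqrt c • G)ᵀ := by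
    rw [Matrix.transpose_smul, Matrix.smul_mul, Matrix.mul_smul, smul_smul,
      Real.mul_self_sqrt hc]
  have hGG : (c • (G * Gᵀ)).PosSemidef := by
    rw [hsplit, ← Matrix.conjTranspose_eq_transpose_of_trivial]
    exact Matrix.posSemidef_self_mul_conjTranspose _
  have hS : S.PosDef := hC.add_posSemidef hGG
  have hdet : IsUnit S.det := isUnit_iff_ne_zero.mpr (ne_of_gt hS.det_pos)
  have hSinv : S * S⁻¹ = 1 := Matrix.mul_nonsing_inv _ hdet
  have hSsymm : Sᵀ = S := by
    rw [← Matrix.conjTranspose_eq_transpose_of_trivial]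
    exact hS.isHermitian
  set K := ((M : ℝ) - 1)⁻¹ • (E * Gᵀ * S⁻¹) with hK
  have hKT : S * Kᵀ = ((M : ℝ) - 1)⁻¹ • (G * Eᵀ) := by
    rw [hK, Matrix.transpose_smul, Matrix.mul_smul]
    congr 1
    rw [Matrix.transpose_mul, Matrix.transpose_mul, Matrix.transpose_transpose,
      Matrix.transpose_nonsing_inv, hSsymm, ← Matrix.mul_assoc, ← Matrix.mul_assoc,
      hSinv, Matrix.one_mul]
  have h1 : Matrix.trace (K * C * Kᵀ) + c * Matrix.trace (K * G * Gᵀ * Kᵀ)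
      = Matrix.trace (K * S * Kᵀ) := by
    rw [hSdef]
    simp only [Matrix.mul_add, Matrix.add_mul, Matrix.trace_add, Matrix.mul_smul,
      Matrix.smul_mul, Matrix.trace_smul, smul_eq_mul, Matrix.mul_assoc]
  have h2 : Matrix.trace (K * S * Kᵀ) = ((M : ℝ) - 1)⁻¹ * Matrix.trace (K * G * Eᵀ) := by
    rw [Matrix.mul_assoc, hKT, Matrix.mul_smul, Matrix.trace_smul, smul_eq_mul,
      Matrix.mul_assoc]
  rw [h2] at h1
  exact h1.symm
end

section
/- (Square-root condition for the ETKF transformation.) Let E ∈ ℝ^{d×M} and Γ ∈ ℝ^{p×M} with M ≥ 2, let C ∈ ℝ^{p×p} be symmetric positive definite and h ≥ 0. Then, with K := (1/(M−1)) E Γᵀ (C + (h/(M−1)) ΓΓᵀ)⁻¹, (1/(M−1)) · E (Id_M + (h/(M−1)) Γᵀ C⁻¹ Γ)⁻¹ Eᵀ = (1/(M−1)) E Eᵀ − (h/(M−1)) K Γ Eᵀ. In particular, the transformed ensemble deviations E T with T := ((Id_M + (h/(M−1)) Γᵀ C⁻¹ Γ)⁻¹)^{1/2} reproduce exactly the Kalman-updated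 empirical covariance matrix. -/
open Matrix MeasureTheory
open scoped Matrix.Norms.L2Operator NNReal RealInnerProductSpace

lemma smul_posSemidef' {n : ℕ} {B : Matrix (Fin n) (Fin n) ℝ} (hB : B.PosSemidef)
    {c : ℝ} (hc : 0 ≤ c) : (c • B).PosSemidef := by
  refine ⟨by simp only [Matrix.IsHermitian, conjTranspose_smul, hB.isHermitian.eq, star_trivial], fun x => ?_⟩
  exact (hB.smul hc).2 x

lemma woodbury' {p M : ℕ} (Γ : Matrix (Fin p) (Fin M) ℝ)
    (C : Matrix (Fin p) (Fin p) ℝ) (hC : C.PosDef) {c : ℝ} (hc : 0 ≤ c) :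
    ((1 : Matrix (Fin M) (Fin M) ℝ) + c • (Γᵀ * C⁻¹ * Γ))⁻¹ =
      1 - c • (Γᵀ * (C + c • (Γ * Γᵀ))⁻¹ * Γ) := by
  have hGG : (Γ * Γᵀ).PosSemidef := by
    simpa using posSemidef_self_mul_conjTranspose Γ
  have hB : (C + c • (Γ * Γᵀ)).PosDef := hC.add_posSemidef (smul_posSemidef' hGG hc)
  have hA : ((1 : Matrix (Fin M) (Fin M) ℝ) + c • (Γᵀ * C⁻¹ * Γ)).PosDef := by
    have h1 : (Γᵀ * C⁻¹ * Γ).PosSemidef := by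
      simpa using hC.inv.posSemidef.conjTranspose_mul_mul_same Γ
    simpa [add_comm] using (Matrix.PosDef.one (n := Fin M) (R := ℝ)).add_posSemidef
      (smul_posSemidef' h1 hc)
  apply inv_eq_right_inv
  have hCC : C⁻¹ * C = 1 := Matrix.nonsing_inv_mul C ((Matrix.isUnit_iff_isUnit_det C).mp hC.isUnit)
  have hBB : (C + c • (Γ * Γᵀ)) * (C + c • (Γ * Γᵀ))⁻¹ = 1 := Matrix.mul_nonsing_inv _ ((Matrix.isUnit_iff_isUnit_det _).mp hB.isUnit)
  set Binv := (C + c • (Γ * Γᵀ))⁻¹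
  have key : c • (Γᵀ * C⁻¹ * Γ) - c • (Γᵀ * Binv * Γ) -
      c • (Γᵀ * C⁻¹ * Γ) * (c • (Γᵀ * Binv * Γ)) = 0 := by
    have expand : Γᵀ * C⁻¹ * Γ = Γᵀ * (C⁻¹ * (C + c • (Γ * Γᵀ)) * Binv) * Γ := by
      rw [Matrix.mul_assoc C⁻¹, hBB, Matrix.mul_one]
    calc c • (Γᵀ * C⁻¹ * Γ) - c • (Γᵀ * Binv * Γ) -
        c • (Γᵀ * C⁻¹ * Γ) * (c • (Γᵀ * Binv * Γ))
        = c • (Γᵀ * (C⁻¹ * (C + c • (Γ * Γᵀ)) * Binv) * Γ) - c • (Γᵀ * Binv * Γ)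
          - c • (Γᵀ * ((c • (C⁻¹ * (Γ * Γᵀ))) * Binv) * Γ) := by
          rw [← expand]
          congr 1
          simp only [Matrix.smul_mul, Matrix.mul_smul, smul_smul]
          ring_nf
          congr 1
          simp [Matrix.mul_assoc]
      _ = 0 := by
          simp only [Matrix.mul_add, Matrix.add_mul, Matrix.mul_one, mul_smul_comm,
            smul_mul_assoc, hCC, Matrix.one_mul, smul_add]
          abel
  have : (1 + c • (Γᵀ * C⁻¹ * Γ)) * (1 - c • (Γᵀ * Binv * Γ)) =
      1 + (c • (Γᵀ * C⁻¹ * Γ) - c • (Γᵀ * Binv * Γ) -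
        c • (Γᵀ * C⁻¹ * Γ) * (c • (Γᵀ * Binv * Γ))) := by
    simp only [Matrix.mul_sub, Matrix.sub_mul, Matrix.add_mul, Matrix.one_mul, Matrix.mul_one]
    abel
  rw [this, key, add_zero]

/-- square-root condition for the ETKF transformation: with
`K = (1/(M−1)) E Γᵀ (C + (h/(M−1)) ΓΓᵀ)⁻¹`,
`(1/(M−1)) E (Id + (h/(M−1)) Γᵀ C⁻¹ Γ)⁻¹ Eᵀ = (1/(M−1)) E Eᵀ − (h/(M−1)) K Γ Eᵀ`;
in particular the transformed deviations `E T`, with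
`T = ((Id + (h/(M−1)) Γᵀ C⁻¹ Γ)⁻¹)^{1/2}`, reproduce the Kalman-updated empirical
covariance matrix. -/
theorem etkf_square_root_condition {d p M : ℕ} (hM : 2 ≤ M)
    (E : Matrix (Fin d) (Fin M) ℝ) (Γ : Matrix (Fin p) (Fin M) ℝ)
    (C : Matrix (Fin p) (Fin p) ℝ) (hC : C.PosDef) (h : ℝ) (hh : 0 ≤ h)
    (hT : ((((1 : Matrix (Fin M) (Fin M) ℝ) +
        (h / ((M : ℝ) - 1)) • (Γᵀ * C⁻¹ * Γ)))⁻¹).PosSemidef) :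
    (((M : ℝ) - 1)⁻¹) •
        (E * ((1 : Matrix (Fin M) (Fin M) ℝ) + (h / ((M : ℝ) - 1)) • (Γᵀ * C⁻¹ * Γ))⁻¹ * Eᵀ) =
      (((M : ℝ) - 1)⁻¹) • (E * Eᵀ) -
        (h / ((M : ℝ) - 1)) •
          ((((M : ℝ) - 1)⁻¹ • (E * Γᵀ * (C + (h / ((M : ℝ) - 1)) • (Γ * Γᵀ))⁻¹)) * Γ * Eᵀ) ∧
    (((M : ℝ) - 1)⁻¹) • ((E * ((hT.1.eigenvectorUnitary : Matrix (Fin M) (Fin M) ℝ) * diagonal (Real.sqrt ∘ hT.1.eigenvalues) * (star hT.1.eigenvectorUnitary : Matrix (Fin M) (Fin M) ℝ))) * (E * ((hT.1.eigenvectorUnitary : Matrix (Fin M) (Fin M) ℝ) * diagonal (Real.sqrt ∘ hT.1.eigenvalues) * (star hT.1.eigenvectorUnitary : Matrix (Fin M) (Fin M) ℝ)))ᵀ) =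
      (((M : ℝ) - 1)⁻¹) • (E * Eᵀ) -
        (h / ((M : ℝ) - 1)) •
          ((((M : ℝ) - 1)⁻¹ • (E * Γᵀ * (C + (h / ((M : ℝ) - 1)) • (Γ * Γᵀ))⁻¹)) * Γ * Eᵀ) := by
  set c : ℝ := h / ((M : ℝ) - 1) with hc_def
  have hMpos : (0 : ℝ) < (M : ℝ) - 1 := by
    have : (2 : ℝ) ≤ (M : ℝ) := by exact_mod_cast hM
    linarith
  have hc : 0 ≤ c := div_nonneg hh hMpos.le
  have hW := woodbury' Γ C hC hc
  have part1 : (((M : ℝ) - 1)⁻¹) •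
      (E * ((1 : Matrix (Fin M) (Fin M) ℝ) + c • (Γᵀ * C⁻¹ * Γ))⁻¹ * Eᵀ) =
      (((M : ℝ) - 1)⁻¹) • (E * Eᵀ) -
        c • ((((M : ℝ) - 1)⁻¹ • (E * Γᵀ * (C + c • (Γ * Γᵀ))⁻¹)) * Γ * Eᵀ) := by
    rw [hW]
    simp only [Matrix.mul_sub, Matrix.sub_mul, Matrix.mul_one, Matrix.one_mul,
      Matrix.mul_smul, Matrix.smul_mul, smul_sub, smul_smul, Matrix.mul_assoc]
    rw [mul_comm]
  refine ⟨part1, ?_⟩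
  set U : Matrix (Fin M) (Fin M) ℝ := (hT.1.eigenvectorUnitary : Matrix (Fin M) (Fin M) ℝ) with hU
  set D : Matrix (Fin M) (Fin M) ℝ := diagonal (Real.sqrt ∘ hT.1.eigenvalues) with hDdef
  have hUU : star U * U = 1 := by
    have := Unitary.coe_star_mul_self hT.1.eigenvectorUnitary
    simpa only [Unitary.coe_star, ← hU] using this
  have hstar : star U = Uᵀ := by
    rw [Matrix.star_eq_conjTranspose, conjTranspose_eq_transpose_of_trivial]
  have hspec := hT.1.spectral_theorem
  simp only [Unitary.conjStarAlgAut_apply, Unitary.coe_star, ← hU] at hspec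
  have hD : D * D = diagonal (RCLike.ofReal ∘ hT.1.eigenvalues) := by
    rw [hDdef, diagonal_mul_diagonal]
    congr 1
    funext i
    simp [Real.mul_self_sqrt (hT.eigenvalues_nonneg i)]
  have hSym : (U * D * star U)ᵀ =
      U * D * star U := by
    rw [hstar, Matrix.transpose_mul, Matrix.transpose_mul, Matrix.transpose_transpose, hDdef,
      diagonal_transpose]
    exact (Matrix.mul_assoc _ _ _).symm
  have : (E * (U * D * star U)) *
      (E * (U * D * star U))ᵀ =
      E * ((1 : Matrix (Fin M) (Fin M) ℝ) + c • (Γᵀ * C⁻¹ * Γ))⁻¹ * Eᵀ := by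
    rw [Matrix.transpose_mul, hSym]
    conv_rhs => rw [hspec]
    simp only [Matrix.mul_assoc]
    rw [← Matrix.mul_assoc (star U) U, hUU, Matrix.one_mul, ← Matrix.mul_assoc D D, hD]
  rw [this]
  exact part1
end
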